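/- arXiv:2007.07282 — 2 statements merged into one kernel-verified Lean document; each statement's English description precedes it below -/
import Mathlib

section
/- Let A be a Noetherian ℤ-graded commutative ring. Then *dim(A) ≤ dim(A) ≤ *dim(A) + 1, where dim is Krull dimension and *dim is the supremum of lengths of chains of graded prime ideals. -/
open DirectSum


section PITsec

variable {R : Type*} [CommRing R]

/-- Restrict Artinian-ness along a surjective ring hom with compatible scalars. -/
private theorem artinian_restrict {S M : Type*} [CommRing S] [AddCommGroup M]
    [Module R M] [Module S M] (f : R →+* S) (hf : Function.Surjective f)
    (hcompat : ∀ (r : R) (x : M), f r • x = r • x)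
    (hA : IsArtinian S M) : IsArtinian R M := by
  rw [isArtinian_iff]
  have wf : WellFounded ((· < ·) : Submodule S M → Submodule S M → Prop) :=
    (isArtinian_iff _ _).mp hA
  let g : Submodule R M → Submodule S M := fun p =>
    { carrier := p
      add_mem' := fun ha hb => p.add_mem ha hb
      zero_mem' := p.zero_mem
      smul_mem' := by
        intro c x hx
        obtain ⟨r, rfl⟩ := hf c
        rw [hcompat]
        exact p.smul_mem r hx }
  have hg : ∀ a b : Submodule R M, a < b → g a < g b := by
    intro a b hab
    rw [lt_iff_le_not_ge] at hab ⊢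
    constructor
    · intro x hx; exact hab.1 hx
    · intro hle
      exact hab.2 fun x hx => hle hx
  exact Subrelation.wf (fun {a b} h => hg a b h) (InvImage.wf g wf)

private theorem art_mod_pow [IsNoetherianRing R] {m : Ideal R} (hm : m.IsMaximal) :
    ∀ k : ℕ, IsArtinian R (R ⧸ m ^ k)
  | 0 => by
      have : Subsingleton (R ⧸ m ^ 0) := by
        rw [pow_zero, Ideal.one_eq_top]
        exact ⟨fun a b => Quotient.inductionOn₂' a b fun x y =>
          Ideal.Quotient.eq.mpr trivial⟩
      infer_instance
  | (k + 1) => by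
      have ih := art_mod_pow hm k
      have hle : m ^ (k + 1) ≤ m ^ k := Ideal.pow_le_pow_right (Nat.le_succ k)
      set M := R ⧸ m ^ (k + 1) with hM
      let mk1 : R →ₗ[R] M := (m ^ (k + 1) : Ideal R).mkQ
      let NN : Submodule R M := Submodule.map mk1 (m ^ k : Ideal R)
      -- quotient part
      have e : ((M ⧸ NN) ≃ₗ[R] (R ⧸ m ^ k)) :=
        Submodule.quotientQuotientEquivQuotient (m ^ (k+1) : Ideal R) (m ^ k : Ideal R) hle
      have hquot : IsArtinian R (M ⧸ NN) := isArtinian_of_linearEquiv e.symm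
      -- torsion part
      have htors : Module.IsTorsionBySet R NN ((m : Ideal R) : Set R) := by
        rintro ⟨x, hx⟩ ⟨i, hi⟩
        obtain ⟨x', hx', rfl⟩ := Submodule.mem_map.mp hx
        ext
        show i • ((m ^ (k + 1) : Ideal R).mkQ x') = 0
        rw [← map_smul, Submodule.mkQ_apply, Submodule.Quotient.mk_eq_zero]
        rw [smul_eq_mul, pow_succ, mul_comm (m ^ k) m]
        exact Ideal.mul_mem_mul hi hx'
      letI : Module (R ⧸ m) NN := htors.module
      letI : IsScalarTower R (R ⧸ m) NN := htors.isScalarTower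
      letI : Field (R ⧸ m) := Ideal.Quotient.field m
      have hNoethR : IsNoetherian R NN := by
        have h1 : IsNoetherian R M := by
          have : IsNoetherian R R := ‹IsNoetherianRing R›
          infer_instance
        exact isNoetherian_submodule' NN
      have hNoethk : IsNoetherian (R ⧸ m) NN := isNoetherian_of_tower R hNoethR
      have hfin : Module.Finite (R ⧸ m) NN := ⟨IsNoetherian.noetherian ⊤⟩
      have hartk : IsArtinian (R ⧸ m) NN := isArtinian_of_fg_of_artinian'
      have hsub : IsArtinian R NN :=
        artinian_restrict (Ideal.Quotient.mk m) Ideal.Quotient.mk_surjective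
          (fun r x => htors.mk_smul r x) hartk
      exact (isArtinian_iff_submodule_quotient NN).mpr ⟨hsub, hquot⟩

private theorem art_quot_of_pow_le [IsNoetherianRing R] {m J : Ideal R} (hm : m.IsMaximal)
    {k : ℕ} (h : m ^ k ≤ J) : IsArtinianRing (R ⧸ J) := by
  have h1 : IsArtinian R (R ⧸ J) := by
    let f : (R ⧸ (m ^ k : Ideal R)) →ₗ[R] (R ⧸ J) :=
      Submodule.mapQ _ _ LinearMap.id h
    have hs : Function.Surjective f := by
      intro x
      obtain ⟨y, rfl⟩ := Ideal.Quotient.mk_surjective (I := J) x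
      exact ⟨Ideal.Quotient.mk _ y, rfl⟩
    haveI := art_mod_pow hm k
    exact isArtinian_of_surjective _ f hs
  exact isArtinianRing_iff.mpr (isArtinian_of_tower R h1)

end PITsec
section PIT2

variable {R : Type*} [CommRing R]

/-- **Krull's principal ideal theorem** (relative form): if `p` is minimal over the
principal ideal `(a)` and `q < p` is prime, then any prime `t ≤ q` contains `q`. -/
private theorem pit [IsNoetherianRing R] {a : R} {p q : Ideal R}
    (hp : p.IsPrime) (hq : q.IsPrime)
    (hmin : p ∈ (Ideal.span {a}).minimalPrimes) (hqp : q < p)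
    {t : Ideal R} (ht : t.IsPrime) (htq : t ≤ q) : q ≤ t := by
  classical
  haveI := hp; haveI := hq
  have haq : a ∉ q := by
    intro haq
    have : p ≤ q := hmin.2 ⟨hq, by rwa [Ideal.span_le, Set.singleton_subset_iff]⟩ hqp.le
    exact hqp.ne (le_antisymm hqp.le this)
  let φ : R →+* Localization.AtPrime p := algebraMap R (Localization.AtPrime p)
  let φq : R →+* Localization.AtPrime q := algebraMap R (Localization.AtPrime q)
  haveI hNR' : IsNoetherianRing (Localization.AtPrime p) :=
    IsLocalization.isNoetherianRing p.primeCompl _ ‹_›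
  haveI hNRq : IsNoetherianRing (Localization.AtPrime q) :=
    IsLocalization.isNoetherianRing q.primeCompl _ ‹_›
  -- the radical of (φ a) is the maximal ideal
  have hrad : (Ideal.span {φ a}).radical = IsLocalRing.maximalIdeal (Localization.AtPrime p) := by
    rw [Ideal.radical_eq_sInf]
    apply le_antisymm
    · apply sInf_le
      refine ⟨?_, (IsLocalRing.maximalIdeal.isMaximal _).isPrime⟩
      rw [Ideal.span_le, Set.singleton_subset_iff, ← Localization.AtPrime.map_eq_maximalIdeal]
      exact Ideal.mem_map_of_mem _ (hmin.1.2 (Ideal.subset_span rfl))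
    · apply le_sInf
      rintro J ⟨hJa, hJp⟩
      have hJm : J ≤ IsLocalRing.maximalIdeal _ := IsLocalRing.le_maximalIdeal hJp.ne_top
      have hcomap : Ideal.comap φ J ≤ p := by
        refine le_trans (Ideal.comap_mono hJm) ?_
        exact (Localization.AtPrime.under_maximalIdeal (I := p)).le
      have haJ : a ∈ Ideal.comap φ J := hJa (Ideal.subset_span rfl)
      have hple : p ≤ Ideal.comap φ J :=
        hmin.2 ⟨Ideal.IsPrime.comap φ (hK := hJp),
          by rwa [Ideal.span_le, Set.singleton_subset_iff]⟩ hcomap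
      have hpj : Ideal.comap φ J = p := le_antisymm hcomap hple
      have : J = IsLocalRing.maximalIdeal _ := by
        rw [← IsLocalization.map_comap p.primeCompl (Localization.AtPrime p) J]
        change Ideal.map φ (Ideal.comap φ J) = _
        rw [hpj]
        exact Localization.AtPrime.map_eq_maximalIdeal
      exact this.ge
  obtain ⟨k0, hk0⟩ : ∃ k, (IsLocalRing.maximalIdeal (Localization.AtPrime p)) ^ k ≤
      Ideal.span {φ a} := by
    obtain ⟨k, hk⟩ := Ideal.exists_radical_pow_le_of_fg (Ideal.span {φ a})
      (by rw [hrad]; exact IsNoetherian.noetherian _)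
    exact ⟨k, by rwa [hrad] at hk⟩
  haveI hart : IsArtinianRing ((Localization.AtPrime p) ⧸ Ideal.span {φ a}) :=
    art_quot_of_pow_le (IsLocalRing.maximalIdeal.isMaximal _) hk0
  -- the map between the two localizations
  have hsub : p.primeCompl ≤ Submonoid.comap (RingHom.id R) q.primeCompl := by
    intro x hx hxq
    exact hx (hqp.le hxq)
  let ψ : Localization.AtPrime p →+* Localization.AtPrime q :=
    IsLocalization.map _ (RingHom.id R) hsub
  have hψφ' : ∀ x : R, ψ (φ x) = φq x := fun x => by
    have := IsLocalization.map_comp (S := Localization.AtPrime p)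
      (Q := Localization.AtPrime q) hsub
    calc ψ (φ x) = (ψ.comp φ) x := rfl
    _ = φq x := by rw [this]; simp; rfl
  -- symbolic powers
  let P : ℕ → Ideal (Localization.AtPrime p) := fun n => ((q ^ n).map φq).comap ψ
  have hPanti : ∀ n, P (n + 1) ≤ P n := fun n =>
    Ideal.comap_mono (Ideal.map_mono (Ideal.pow_le_pow_right (Nat.le_succ n)))
  have hsat : ∀ {n : ℕ} {r : Localization.AtPrime p}, r * φ a ∈ P n → r ∈ P n := by
    intro n r hr
    have hu : IsUnit (ψ (φ a)) := by
      rw [hψφ' a]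
      exact IsLocalization.map_units _ (⟨a, haq⟩ : q.primeCompl)
    have h2 : ψ r * ψ (φ a) ∈ (q ^ n).map φq := by
      rw [← map_mul]; exact hr
    rw [mul_comm] at h2
    exact (Ideal.unit_mul_mem_iff_mem _ hu).mp h2
  -- stabilization of the images mod (φ a)
  let mkJ := Ideal.Quotient.mk (Ideal.span {φ a})
  have hmono : ∀ ⦃n m : ℕ⦄, n ≤ m → (P m).map mkJ ≤ (P n).map mkJ := by
    intro n m hnm
    apply Ideal.map_mono
    apply Ideal.comap_mono
    exact Ideal.map_mono (Ideal.pow_le_pow_right hnm)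
  obtain ⟨k, hk⟩ := IsArtinian.monotone_stabilizes
    (⟨fun n => OrderDual.toDual ((P n).map mkJ), fun n m hnm => hmono hnm⟩ :
      ℕ →o (Ideal ((Localization.AtPrime p) ⧸ Ideal.span {φ a}))ᵒᵈ)
  have hstab : (P k).map mkJ = (P (k+1)).map mkJ := hk (k+1) (Nat.le_succ k)
  -- Nakayama step: P k = P (k+1)
  have hPk : P k = P (k + 1) := by
    refine le_antisymm ?_ (hPanti k)
    have hstep : P k ≤ P (k+1) ⊔ Ideal.span {φ a} • P k := by
      intro x hx
      have : mkJ x ∈ (P (k+1)).map mkJ := by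
        rw [← hstab]; exact Ideal.mem_map_of_mem _ hx
      obtain ⟨y, hy, hyx⟩ := (Ideal.mem_map_iff_of_surjective mkJ
        Ideal.Quotient.mk_surjective).mp this
      have hxy : x - y ∈ Ideal.span {φ a} := by
        rw [← Ideal.Quotient.mk_eq_mk_iff_sub_mem]
        exact hyx.symm
      obtain ⟨r, hr⟩ := Ideal.mem_span_singleton'.mp hxy
      have hrP : r ∈ P k := hsat (by rw [hr]; exact sub_mem hx (hPanti k hy))
      have : x = y + r * φ a := by rw [hr]; ring
      rw [this]
      refine Submodule.add_mem_sup hy ?_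
      rw [smul_eq_mul, mul_comm r (φ a)]
      exact Ideal.mul_mem_mul (Ideal.subset_span rfl) hrP
    have hjac : Ideal.span {φ a} ≤ (⊥ : Ideal (Localization.AtPrime p)).jacobson := by
      rw [IsLocalRing.jacobson_eq_maximalIdeal ⊥ bot_ne_top]
      rw [Ideal.span_le, Set.singleton_subset_iff, ← Localization.AtPrime.map_eq_maximalIdeal]
      exact Ideal.mem_map_of_mem _ (hmin.1.2 (Ideal.subset_span rfl))
    have := Submodule.smul_le_of_le_smul_of_le_jacobson_bot
      (IsNoetherian.noetherian (P k)) hjac hstep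
    -- P k ≤ P (k+1) ⊔ span{φa} • P k  and  span{φa} • P k ≤ P (k+1) gives the claim
    intro x hx
    rcases Submodule.mem_sup.mp (hstep hx) with ⟨y, hy, z, hz, rfl⟩
    exact Submodule.add_mem _ hy (this hz)
  -- transfer to the localization at q
  have hQ : Ideal.comap φq ((q ^ k).map φq) = Ideal.comap φq ((q ^ (k+1)).map φq) := by
    have h1 : ∀ n : ℕ, Ideal.comap φq ((q ^ n).map φq) = Ideal.comap φ (P n) := by
      intro n
      rw [Ideal.comap_comap]
      congr 1
      ext x
      simp only [RingHom.comp_apply]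
      rw [hψφ' x]
    rw [h1 k, h1 (k+1), hPk]
  have hmapQ : ((q).map φq) ^ k = ((q).map φq) ^ (k + 1) := by
    have h2 : ∀ n : ℕ, ((q ^ n).map φq) = ((q).map φq) ^ n := fun n => Ideal.map_pow _ _ _
    rw [← h2 k, ← h2 (k+1)]
    calc (q ^ k).map φq
        = Ideal.map φq (Ideal.comap φq ((q ^ k).map φq)) :=
          (IsLocalization.map_comap q.primeCompl _ _).symm
      _ = Ideal.map φq (Ideal.comap φq ((q ^ (k+1)).map φq)) := by rw [hQ]
      _ = (q ^ (k+1)).map φq := IsLocalization.map_comap q.primeCompl _ _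
  -- Nakayama again: (map q)^k = ⊥
  have hbot : ((q).map φq) ^ k = ⊥ := by
    apply Submodule.eq_bot_of_le_smul_of_le_jacobson_bot ((q).map φq)
    · exact IsNoetherian.noetherian _
    · rw [smul_eq_mul, ← pow_succ']
      exact hmapQ.le
    · rw [IsLocalRing.jacobson_eq_maximalIdeal ⊥ bot_ne_top,
        ← Localization.AtPrime.map_eq_maximalIdeal]
  -- conclude
  intro b hb
  have hmem : φq (b ^ k) = 0 := by
    rw [map_pow]
    have : φq b ∈ (q).map φq := Ideal.mem_map_of_mem _ hb
    have h3 : (φq b) ^ k ∈ ((q).map φq) ^ k := Ideal.pow_mem_pow this k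
    rwa [hbot, Ideal.mem_bot] at h3
  obtain ⟨⟨s, hs⟩, hsb⟩ := (IsLocalization.map_eq_zero_iff q.primeCompl _ _).mp hmem
  have hst : s * b ^ k ∈ t := by rw [hsb]; exact t.zero_mem
  have hbk : b ^ k ∈ t := by
    rcases ht.mem_or_mem hst with h | h
    · exact absurd (htq h) hs
    · exact h
  exact ht.mem_of_pow_mem k hbk

end PIT2
section GradedDiv

open DirectSum

variable {A : Type*} [CommRing A] (𝒜 : ℤ → AddSubgroup A) [GradedRing 𝒜] (r : Ideal A)

private lemma rS_finite (x : A) : {i : ℤ | (decompose 𝒜 x i : A) ∉ r}.Finite := by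
  classical
  apply Set.Finite.subset (DFinsupp.support (decompose 𝒜 x)).finite_toSet
  intro i hi
  simp only [Finset.coe_sort_coe, Finset.mem_coe, DFinsupp.mem_support_iff]
  intro h0
  apply hi
  rw [h0]
  simpa using r.zero_mem

/-- Degrees whose component lies outside `r`. -/
private noncomputable def rS (x : A) : Finset ℤ := (rS_finite 𝒜 r x).toFinset

private lemma mem_rS {x : A} {i : ℤ} : i ∈ rS 𝒜 r x ↔ (decompose 𝒜 x i : A) ∉ r :=
  (rS_finite 𝒜 r x).mem_toFinset

private lemma mem_r_of_forall {x : A} (h : ∀ i, (decompose 𝒜 x i : A) ∈ r) : x ∈ r := by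
  classical
  rw [← DirectSum.sum_support_decompose 𝒜 x]
  exact Ideal.sum_mem _ fun i _ => h i

private lemma rS_nonempty {x : A} (hx : x ∉ r) : (rS 𝒜 r x).Nonempty := by
  by_contra h
  rw [Finset.not_nonempty_iff_eq_empty] at h
  refine hx (mem_r_of_forall 𝒜 r fun i => ?_)
  by_contra hi
  have : i ∈ rS 𝒜 r x := (mem_rS 𝒜 r).mpr hi
  simp [h] at this

/-- Top degree outside `r` (junk value if `x ∈ r`). -/
private noncomputable def topD (x : A) : ℤ := WithBot.unbotD 0 ((rS 𝒜 r x).max)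

private noncomputable def botD (x : A) : ℤ := WithTop.untopD 0 ((rS 𝒜 r x).min)

private noncomputable def spanN (x : A) : ℕ := (topD 𝒜 r x - botD 𝒜 r x).toNat

private lemma topD_eq {x : A} (hx : x ∉ r) :
    topD 𝒜 r x = (rS 𝒜 r x).max' (rS_nonempty 𝒜 r hx) := by
  rw [topD, ← Finset.coe_max' (rS_nonempty 𝒜 r hx)]; rfl

private lemma botD_eq {x : A} (hx : x ∉ r) :
    botD 𝒜 r x = (rS 𝒜 r x).min' (rS_nonempty 𝒜 r hx) := by
  rw [botD, ← Finset.coe_min' (rS_nonempty 𝒜 r hx)]; rfl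

private lemma topD_mem {x : A} (hx : x ∉ r) : topD 𝒜 r x ∈ rS 𝒜 r x := by
  rw [topD_eq 𝒜 r hx]; exact Finset.max'_mem _ _

private lemma botD_mem {x : A} (hx : x ∉ r) : botD 𝒜 r x ∈ rS 𝒜 r x := by
  rw [botD_eq 𝒜 r hx]; exact Finset.min'_mem _ _

private lemma le_topD {x : A} (hx : x ∉ r) {i : ℤ} (hi : i ∈ rS 𝒜 r x) : i ≤ topD 𝒜 r x := by
  rw [topD_eq 𝒜 r hx]; exact Finset.le_max' _ _ hi

private lemma botD_le {x : A} (hx : x ∉ r) {i : ℤ} (hi : i ∈ rS 𝒜 r x) : botD 𝒜 r x ≤ i := by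
  rw [botD_eq 𝒜 r hx]; exact Finset.min'_le _ _ hi

private lemma botD_le_topD {x : A} (hx : x ∉ r) : botD 𝒜 r x ≤ topD 𝒜 r x :=
  le_topD 𝒜 r hx (botD_mem 𝒜 r hx)

/-- Component of a product of a homogeneous element with anything. -/
private lemma comp_homog_mul {c : A} {d : ℤ} (hc : c ∈ 𝒜 d) (x : A) (n : ℤ) :
    (decompose 𝒜 (c * x) n : A) = c * (decompose 𝒜 x (n - d) : A) := by
  classical
  have h2 := DirectSum.coe_decompose_mul_add_of_left_mem 𝒜 (j := n - d) hc (b := x)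
  rwa [show d + (n - d) = n by ring] at h2

private lemma comp_mul_homog {c : A} {d : ℤ} (hc : c ∈ 𝒜 d) (x : A) (n : ℤ) :
    (decompose 𝒜 (x * c) n : A) = (decompose 𝒜 x (n - d) : A) * c := by
  classical
  have h2 := DirectSum.coe_decompose_mul_add_of_right_mem 𝒜 (i := n - d) hc (a := x)
  rwa [show n - d + d = n by ring] at h2

/-- Components of a product outside the window are in `r`. -/
private lemma comp_mul_mem_top {x y : A} (hx : x ∉ r) (hy : y ∉ r) {n : ℤ}
    (hn : topD 𝒜 r x + topD 𝒜 r y < n) : (decompose 𝒜 (x * y) n : A) ∈ r := by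
  classical
  rw [DirectSum.decompose_mul, DirectSum.coe_mul_apply]
  refine Ideal.sum_mem _ fun ij hij => ?_
  obtain ⟨hmem, hsum⟩ := Finset.mem_filter.mp hij
  by_cases h1 : ij.1 ∈ rS 𝒜 r x
  · have h2 : ij.2 ∉ rS 𝒜 r y := by
      intro h2
      have := le_topD 𝒜 r hx h1
      have := le_topD 𝒜 r hy h2
      omega
    have : (decompose 𝒜 y ij.2 : A) ∈ r := not_not.mp fun hc => h2 ((mem_rS 𝒜 r).mpr hc)
    exact Ideal.mul_mem_left _ _ this
  · have : (decompose 𝒜 x ij.1 : A) ∈ r := not_not.mp fun hc => h1 ((mem_rS 𝒜 r).mpr hc)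
    exact Ideal.mul_mem_right _ _ this

private lemma comp_mul_mem_bot {x y : A} (hx : x ∉ r) (hy : y ∉ r) {n : ℤ}
    (hn : n < botD 𝒜 r x + botD 𝒜 r y) : (decompose 𝒜 (x * y) n : A) ∈ r := by
  classical
  rw [DirectSum.decompose_mul, DirectSum.coe_mul_apply]
  refine Ideal.sum_mem _ fun ij hij => ?_
  obtain ⟨hmem, hsum⟩ := Finset.mem_filter.mp hij
  by_cases h1 : ij.1 ∈ rS 𝒜 r x
  · have h2 : ij.2 ∉ rS 𝒜 r y := by
      intro h2
      have := botD_le 𝒜 r hx h1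
      have := botD_le 𝒜 r hy h2
      omega
    have : (decompose 𝒜 y ij.2 : A) ∈ r := not_not.mp fun hc => h2 ((mem_rS 𝒜 r).mpr hc)
    exact Ideal.mul_mem_left _ _ this
  · have : (decompose 𝒜 x ij.1 : A) ∈ r := not_not.mp fun hc => h1 ((mem_rS 𝒜 r).mpr hc)
    exact Ideal.mul_mem_right _ _ this

/-- The top component of a product is congruent to the product of top components. -/
private lemma comp_mul_top_congr {x y : A} (hx : x ∉ r) (hy : y ∉ r) :
    (decompose 𝒜 (x * y) (topD 𝒜 r x + topD 𝒜 r y) : A) -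
      (decompose 𝒜 x (topD 𝒜 r x) : A) * (decompose 𝒜 y (topD 𝒜 r y) : A) ∈ r := by
  classical
  rw [DirectSum.decompose_mul, DirectSum.coe_mul_apply]
  set tx := topD 𝒜 r x
  set ty := topD 𝒜 r y
  have hxs : tx ∈ DFinsupp.support (decompose 𝒜 x) := by
    rw [DFinsupp.mem_support_iff]
    intro h0
    have := (mem_rS 𝒜 r).mp (topD_mem 𝒜 r hx)
    apply this
    rw [h0]
    simpa using r.zero_mem
  have hys : ty ∈ DFinsupp.support (decompose 𝒜 y) := by
    rw [DFinsupp.mem_support_iff]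
    intro h0
    have := (mem_rS 𝒜 r).mp (topD_mem 𝒜 r hy)
    apply this
    rw [h0]
    simpa using r.zero_mem
  have hpair : ((tx, ty) : ℤ × ℤ) ∈ Finset.filter (fun ij => ij.1 + ij.2 = tx + ty)
      (DFinsupp.support (decompose 𝒜 x) ×ˢ DFinsupp.support (decompose 𝒜 y)) := by
    rw [Finset.mem_filter]
    exact ⟨Finset.mem_product.mpr ⟨hxs, hys⟩, rfl⟩
  rw [← Finset.add_sum_erase _ _ hpair]
  have : ∀ ij ∈ (Finset.filter (fun ij => ij.1 + ij.2 = tx + ty)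
      (DFinsupp.support (decompose 𝒜 x) ×ˢ DFinsupp.support (decompose 𝒜 y))).erase (tx, ty),
      (decompose 𝒜 x ij.1 : A) * (decompose 𝒜 y ij.2 : A) ∈ r := by
    intro ij hij
    obtain ⟨hne, hmem⟩ := Finset.mem_erase.mp hij
    obtain ⟨hmem', hsum⟩ := Finset.mem_filter.mp hmem
    rcases lt_trichotomy ij.1 tx with h | h | h
    · have h2 : ij.2 ∉ rS 𝒜 r y := by
        intro h2
        have := le_topD 𝒜 r hy h2
        omega
      exact Ideal.mul_mem_left _ _ (not_not.mp fun hc => h2 ((mem_rS 𝒜 r).mpr hc))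
    · have h2 : ij.2 = ty := by omega
      exact absurd (Prod.ext h h2) hne
    · have h1 : ij.1 ∉ rS 𝒜 r x := by
        intro h1
        have := le_topD 𝒜 r hx h1
        omega
      exact Ideal.mul_mem_right _ _ (not_not.mp fun hc => h1 ((mem_rS 𝒜 r).mpr hc))
  have hsum : ∑ ij ∈ (Finset.filter (fun ij => ij.1 + ij.2 = tx + ty)
      (DFinsupp.support (decompose 𝒜 x) ×ˢ DFinsupp.support (decompose 𝒜 y))).erase (tx, ty),
      (decompose 𝒜 x ij.1 : A) * (decompose 𝒜 y ij.2 : A) ∈ r := Ideal.sum_mem _ this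
  simpa using hsum

/-- For a homogeneous prime `r` and `x, y ∉ r`, the product is not in `r` and
top/bottom degrees add. -/
private lemma mul_topD_botD (hr : r.IsPrime) (hh : r.IsHomogeneous 𝒜) {x y : A}
    (hx : x ∉ r) (hy : y ∉ r) :
    x * y ∉ r ∧ topD 𝒜 r (x * y) = topD 𝒜 r x + topD 𝒜 r y ∧
      botD 𝒜 r (x * y) = botD 𝒜 r x + botD 𝒜 r y := by
  have htopx := (mem_rS 𝒜 r).mp (topD_mem 𝒜 r hx)
  have htopy := (mem_rS 𝒜 r).mp (topD_mem 𝒜 r hy)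
  have hprod : (decompose 𝒜 x (topD 𝒜 r x) : A) * (decompose 𝒜 y (topD 𝒜 r y) : A) ∉ r := by
    intro hc
    rcases hr.mem_or_mem hc with h | h
    exacts [htopx h, htopy h]
  have htopmem : (topD 𝒜 r x + topD 𝒜 r y) ∈ rS 𝒜 r (x * y) := by
    rw [mem_rS]
    intro hc
    apply hprod
    have := comp_mul_top_congr 𝒜 r hx hy
    have h2 : (decompose 𝒜 x (topD 𝒜 r x) : A) * (decompose 𝒜 y (topD 𝒜 r y) : A) =
        (decompose 𝒜 (x * y) (topD 𝒜 r x + topD 𝒜 r y) : A) -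
        ((decompose 𝒜 (x * y) (topD 𝒜 r x + topD 𝒜 r y) : A) -
          (decompose 𝒜 x (topD 𝒜 r x) : A) * (decompose 𝒜 y (topD 𝒜 r y) : A)) := by ring
    rw [h2]
    exact Ideal.sub_mem _ hc this
  -- bottom version via symmetric argument
  have hbotx := (mem_rS 𝒜 r).mp (botD_mem 𝒜 r hx)
  have hboty := (mem_rS 𝒜 r).mp (botD_mem 𝒜 r hy)
  have hxy : x * y ∉ r := by
    intro hc
    exact ((mem_rS 𝒜 r).mp htopmem) (hh _ hc)
  refine ⟨hxy, ?_, ?_⟩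
  · apply le_antisymm
    · by_contra hgt
      push_neg at hgt
      have := comp_mul_mem_top 𝒜 r hx hy (n := topD 𝒜 r (x * y)) hgt
      exact ((mem_rS 𝒜 r).mp (topD_mem 𝒜 r hxy)) this
    · exact le_topD 𝒜 r hxy htopmem
  · -- bottom: mirror of the top argument
    have hbotcongr : (decompose 𝒜 (x * y) (botD 𝒜 r x + botD 𝒜 r y) : A) -
        (decompose 𝒜 x (botD 𝒜 r x) : A) * (decompose 𝒜 y (botD 𝒜 r y) : A) ∈ r := by
      classical
      rw [DirectSum.decompose_mul, DirectSum.coe_mul_apply]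
      set bx := botD 𝒜 r x
      set by' := botD 𝒜 r y
      have hxs : bx ∈ DFinsupp.support (decompose 𝒜 x) := by
        rw [DFinsupp.mem_support_iff]
        intro h0
        apply hbotx
        rw [h0]
        simpa using r.zero_mem
      have hys : by' ∈ DFinsupp.support (decompose 𝒜 y) := by
        rw [DFinsupp.mem_support_iff]
        intro h0
        apply hboty
        rw [h0]
        simpa using r.zero_mem
      have hpair : ((bx, by') : ℤ × ℤ) ∈ Finset.filter (fun ij => ij.1 + ij.2 = bx + by')
          (DFinsupp.support (decompose 𝒜 x) ×ˢ DFinsupp.support (decompose 𝒜 y)) := by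
        rw [Finset.mem_filter]
        exact ⟨Finset.mem_product.mpr ⟨hxs, hys⟩, rfl⟩
      rw [← Finset.add_sum_erase _ _ hpair]
      have hrest : ∀ ij ∈ (Finset.filter (fun ij => ij.1 + ij.2 = bx + by')
          (DFinsupp.support (decompose 𝒜 x) ×ˢ DFinsupp.support (decompose 𝒜 y))).erase (bx, by'),
          (decompose 𝒜 x ij.1 : A) * (decompose 𝒜 y ij.2 : A) ∈ r := by
        intro ij hij
        obtain ⟨hne, hmem⟩ := Finset.mem_erase.mp hij
        obtain ⟨hmem', hsum⟩ := Finset.mem_filter.mp hmem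
        rcases lt_trichotomy ij.1 bx with h | h | h
        · exact Ideal.mul_mem_right _ _ (not_not.mp fun hc =>
            (by have := botD_le 𝒜 r hx ((mem_rS 𝒜 r).mpr hc); omega))
        · have h2 : ij.2 = by' := by omega
          exact absurd (Prod.ext h h2) hne
        · exact Ideal.mul_mem_left _ _ (not_not.mp fun hc =>
            (by have := botD_le 𝒜 r hy ((mem_rS 𝒜 r).mpr hc); omega))
      have hsum2 := Ideal.sum_mem r hrest
      simpa using hsum2
    have hprodb : (decompose 𝒜 x (botD 𝒜 r x) : A) * (decompose 𝒜 y (botD 𝒜 r y) : A) ∉ r := by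
      intro hc
      rcases hr.mem_or_mem hc with h | h
      exacts [hbotx h, hboty h]
    have hbotmem : (botD 𝒜 r x + botD 𝒜 r y) ∈ rS 𝒜 r (x * y) := by
      rw [mem_rS]
      intro hc
      apply hprodb
      have h2 : (decompose 𝒜 x (botD 𝒜 r x) : A) * (decompose 𝒜 y (botD 𝒜 r y) : A) =
          (decompose 𝒜 (x * y) (botD 𝒜 r x + botD 𝒜 r y) : A) -
          ((decompose 𝒜 (x * y) (botD 𝒜 r x + botD 𝒜 r y) : A) -
            (decompose 𝒜 x (botD 𝒜 r x) : A) * (decompose 𝒜 y (botD 𝒜 r y) : A)) := by ring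
      rw [h2]
      exact Ideal.sub_mem _ hc hbotcongr
    apply le_antisymm
    · exact botD_le 𝒜 r hxy hbotmem
    · by_contra hlt
      push_neg at hlt
      have := comp_mul_mem_bot 𝒜 r hx hy (n := botD 𝒜 r (x * y)) hlt
      exact ((mem_rS 𝒜 r).mp (botD_mem 𝒜 r hxy)) this

/-- For a homogeneous element not in `r`, the support is a singleton. -/
private lemma topD_homog {c : A} {d : ℤ} (hc : c ∈ 𝒜 d) (hcr : c ∉ r) :
    topD 𝒜 r c = d ∧ botD 𝒜 r c = d := by
  have hmem : d ∈ rS 𝒜 r c := by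
    rw [mem_rS, DirectSum.decompose_of_mem_same 𝒜 hc]
    exact hcr
  have huniq : ∀ i ∈ rS 𝒜 r c, i = d := by
    intro i hi
    by_contra hne
    rw [mem_rS, DirectSum.decompose_of_mem_ne 𝒜 hc (Ne.symm hne)] at hi
    exact hi r.zero_mem
  constructor
  · exact le_antisymm (huniq _ (topD_mem 𝒜 r hcr)).le (le_topD 𝒜 r hcr hmem)
  · exact le_antisymm (botD_le 𝒜 r hcr hmem) (huniq _ (botD_mem 𝒜 r hcr)).ge

end GradedDiv
section Division

open DirectSum

variable {A : Type*} [CommRing A] (𝒜 : ℤ → AddSubgroup A) [GradedRing 𝒜] (r : Ideal A)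

/-- Graded division with remainder by `u` modulo `r`. -/
private lemma division (hr : r.IsPrime) (hh : r.IsHomogeneous 𝒜) {u : A} (hu : u ∉ r) :
    ∀ (w : A), ∃ (N : ℕ) (v ρ : A),
      (decompose 𝒜 u (topD 𝒜 r u) : A) ^ N * w = v * u + ρ ∧
        (ρ ∈ r ∨ (ρ ∉ r ∧ spanN 𝒜 r ρ < spanN 𝒜 r u)) := by
  classical
  set e := topD 𝒜 r u with he
  set utop := (decompose 𝒜 u e : A) with hutop
  have hue : utop ∈ 𝒜 e := SetLike.coe_mem _
  have hur : utop ∉ r := (mem_rS 𝒜 r).mp (topD_mem 𝒜 r hu)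
  suffices H : ∀ n : ℕ, ∀ w : A, spanN 𝒜 r w ≤ n → ∃ (N : ℕ) (v ρ : A),
      utop ^ N * w = v * u + ρ ∧
        (ρ ∈ r ∨ (ρ ∉ r ∧ spanN 𝒜 r ρ < spanN 𝒜 r u)) by
    intro w
    exact H (spanN 𝒜 r w) w le_rfl
  intro n
  induction n with
  | zero =>
      intro w hw0
      by_cases hwr : w ∈ r
      · exact ⟨0, 0, w, by ring, Or.inl hwr⟩
      by_cases hcmp : spanN 𝒜 r w < spanN 𝒜 r u
      · exact ⟨0, 0, w, by ring, Or.inr ⟨hwr, hcmp⟩⟩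
      -- spanN w = 0 and spanN u = 0
      push_neg at hcmp
      set f := topD 𝒜 r w with hf
      set wf := (decompose 𝒜 w f : A) with hwf
      have hwfr : wf ∉ r := (mem_rS 𝒜 r).mp (topD_mem 𝒜 r hwr)
      have hwfm : wf ∈ 𝒜 f := SetLike.coe_mem _
      refine ⟨1, wf, utop * w - wf * u, by ring, Or.inl ?_⟩
      -- all components of w' are in r
      apply mem_r_of_forall 𝒜 r
      intro i
      rw [DirectSum.decompose_sub]
      have hc1 : (decompose 𝒜 (utop * w) i : A) = utop * (decompose 𝒜 w (i - e) : A) :=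
        comp_homog_mul 𝒜 hue w i
      have hc2 : (decompose 𝒜 (wf * u) i : A) = wf * (decompose 𝒜 u (i - f) : A) :=
        comp_homog_mul 𝒜 hwfm u i
      have hsub : ((decompose 𝒜 (utop * w) - decompose 𝒜 (wf * u)) i : A) =
          (decompose 𝒜 (utop * w) i : A) - (decompose 𝒜 (wf * u) i : A) := by
        simp
      rw [hsub, hc1, hc2]
      -- here spanN w ≤ 0 and spanN u ≤ spanN w, so botD w = f, botD u = e
      have h1 : botD 𝒜 r w ≤ topD 𝒜 r w := botD_le_topD 𝒜 r hwr
      have h2 : botD 𝒜 r u ≤ topD 𝒜 r u := botD_le_topD 𝒜 r hu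
      have hspw : spanN 𝒜 r w = 0 := Nat.le_zero.mp hw0
      have hbw : botD 𝒜 r w = f := by
        rw [spanN] at hspw
        omega
      have hbu : botD 𝒜 r u = e := by
        have : spanN 𝒜 r u = 0 := by omega
        rw [spanN] at this
        omega
      by_cases hie : i = e + f
      · subst hie
        rw [show e + f - e = f by ring, show e + f - f = e by ring]
        rw [← hwf, ← hutop, mul_comm]
        simp
      · -- one of the two component factors is in r
        have hw1 : (decompose 𝒜 w (i - e) : A) ∈ r ∨ (decompose 𝒜 u (i - f) : A) ∈ r := by
          by_contra hboth
          push_neg at hboth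
          have m1 := le_topD 𝒜 r hwr ((mem_rS 𝒜 r).mpr hboth.1)
          have m1' := botD_le 𝒜 r hwr ((mem_rS 𝒜 r).mpr hboth.1)
          have m2 := le_topD 𝒜 r hu ((mem_rS 𝒜 r).mpr hboth.2)
          have m2' := botD_le 𝒜 r hu ((mem_rS 𝒜 r).mpr hboth.2)
          rw [hbw] at m1'
          rw [hbu] at m2'
          rw [← hf] at m1
          rw [← he] at m2
          omega
        rcases hw1 with h | h
        · exact Ideal.sub_mem _ (Ideal.mul_mem_left _ _ h) (Ideal.mul_mem_left _ _
            (by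
              by_contra hc
              have m2 := le_topD 𝒜 r hu ((mem_rS 𝒜 r).mpr hc)
              have m2' := botD_le 𝒜 r hu ((mem_rS 𝒜 r).mpr hc)
              rw [hbu] at m2'
              rw [← he] at m2
              -- i - f = e forced, so i = e + f, contradiction
              exact hie (by omega)))
        · exact Ideal.sub_mem _ (Ideal.mul_mem_left _ _
            (by
              by_contra hc
              have m1 := le_topD 𝒜 r hwr ((mem_rS 𝒜 r).mpr hc)
              have m1' := botD_le 𝒜 r hwr ((mem_rS 𝒜 r).mpr hc)
              rw [hbw] at m1'
              rw [← hf] at m1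
              exact hie (by omega))) (Ideal.mul_mem_left _ _ h)
  | succ n ih =>
      intro w hwn
      by_cases hwr : w ∈ r
      · exact ⟨0, 0, w, by ring, Or.inl hwr⟩
      by_cases hcmp : spanN 𝒜 r w < spanN 𝒜 r u
      · exact ⟨0, 0, w, by ring, Or.inr ⟨hwr, hcmp⟩⟩
      push_neg at hcmp
      set f := topD 𝒜 r w with hf
      set wf := (decompose 𝒜 w f : A) with hwf
      have hwfr : wf ∉ r := (mem_rS 𝒜 r).mp (topD_mem 𝒜 r hwr)
      have hwfm : wf ∈ 𝒜 f := SetLike.coe_mem _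
      set w' := utop * w - wf * u with hw'
      have hw'eq : utop * w = wf * u + w' := by rw [hw']; ring
      by_cases hw'r : w' ∈ r
      · exact ⟨1, wf, w', by rw [pow_one, hw'eq], Or.inl hw'r⟩
      -- bounds on the support of w'
      have h1 : botD 𝒜 r w ≤ topD 𝒜 r w := botD_le_topD 𝒜 r hwr
      have h2 : botD 𝒜 r u ≤ topD 𝒜 r u := botD_le_topD 𝒜 r hu
      have hbound : ∀ i ∈ rS 𝒜 r w',
          i ≤ e + f - 1 ∧ (e + botD 𝒜 r w ≤ i ∨ f + botD 𝒜 r u ≤ i) := by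
        intro i hi
        have hcomp : (decompose 𝒜 w' i : A) =
            utop * (decompose 𝒜 w (i - e) : A) - wf * (decompose 𝒜 u (i - f) : A) := by
          rw [hw', DirectSum.decompose_sub]
          have hsub : ((decompose 𝒜 (utop * w) - decompose 𝒜 (wf * u)) i : A) =
              (decompose 𝒜 (utop * w) i : A) - (decompose 𝒜 (wf * u) i : A) := by simp
          rw [hsub, comp_homog_mul 𝒜 hue w i, comp_homog_mul 𝒜 hwfm u i]
        have hnotr := (mem_rS 𝒜 r).mp hi
        rw [hcomp] at hnotr
        have hone : (decompose 𝒜 w (i - e) : A) ∉ r ∨ (decompose 𝒜 u (i - f) : A) ∉ r := by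
          by_contra hboth
          push_neg at hboth
          exact hnotr (Ideal.sub_mem _ (Ideal.mul_mem_left _ _ hboth.1)
            (Ideal.mul_mem_left _ _ hboth.2))
        have hine : i ≠ e + f := by
          intro hie
          apply hnotr
          rw [hie, show e + f - e = f by ring, show e + f - f = e by ring,
            ← hwf, ← hutop, mul_comm]
          simp
        rcases hone with h | h
        · have m1 := le_topD 𝒜 r hwr ((mem_rS 𝒜 r).mpr h)
          have m1' := botD_le 𝒜 r hwr ((mem_rS 𝒜 r).mpr h)
          rw [← hf] at m1
          constructor
          · rcases (em ((decompose 𝒜 u (i - f) : A) ∉ r)) with h' | h'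
            · have m2 := le_topD 𝒜 r hu ((mem_rS 𝒜 r).mpr h')
              rw [← he] at m2
              omega
            · omega
          · left; omega
        · have m2 := le_topD 𝒜 r hu ((mem_rS 𝒜 r).mpr h)
          have m2' := botD_le 𝒜 r hu ((mem_rS 𝒜 r).mpr h)
          rw [← he] at m2
          constructor
          · rcases (em ((decompose 𝒜 w (i - e) : A) ∉ r)) with h' | h'
            · have m1 := le_topD 𝒜 r hwr ((mem_rS 𝒜 r).mpr h')
              rw [← hf] at m1
              omega
            · omega
          · right; omega
      have htop' := hbound _ (topD_mem 𝒜 r hw'r)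
      have hbot' := hbound _ (botD_mem 𝒜 r hw'r)
      have h3 : botD 𝒜 r w' ≤ topD 𝒜 r w' := botD_le_topD 𝒜 r hw'r
      have hspan' : spanN 𝒜 r w' ≤ n := by
        have q1 : spanN 𝒜 r w = (topD 𝒜 r w - botD 𝒜 r w).toNat := rfl
        have q2 : spanN 𝒜 r u = (topD 𝒜 r u - botD 𝒜 r u).toNat := rfl
        have q3 : spanN 𝒜 r w' = (topD 𝒜 r w' - botD 𝒜 r w').toNat := rfl
        have ht1 := htop'.1
        have he' : e = topD 𝒜 r u := he
        have hf' : f = topD 𝒜 r w := hf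
        rcases hbot'.2 with hb2 | hb2 <;> omega
      obtain ⟨N', v', ρ', heq, hdisj⟩ := ih w' hspan'
      refine ⟨N' + 1, utop ^ N' * wf + v', ρ', ?_, hdisj⟩
      have : utop ^ (N' + 1) * w = utop ^ N' * (utop * w) := by ring
      rw [this, hw'eq, mul_add, heq]
      ring

end Division
section Between

open DirectSum

variable {A : Type*} [CommRing A] (𝒜 : ℤ → AddSubgroup A) [GradedRing 𝒜]

/-- **No prime strictly between a prime and its homogeneous core.** -/
private theorem no_strict_between {p q : Ideal A} (hp : p.IsPrime) (hq : q.IsPrime)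
    (h1 : (p.homogeneousCore 𝒜).toIdeal < q) (h2 : q < p) : False := by
  classical
  set r := (p.homogeneousCore 𝒜).toIdeal with hrdef
  have hr : r.IsPrime := hp.homogeneousCore
  have hh : r.IsHomogeneous 𝒜 := (p.homogeneousCore 𝒜).isHomogeneous
  -- homogeneous elements of p are in r
  have homP : ∀ z : A, z ∈ p → SetLike.IsHomogeneousElem 𝒜 z → z ∈ r :=
    fun z hz hzh => Ideal.mem_homogeneousCore_of_homogeneous_of_mem hzh hz
  obtain ⟨y, hyp, hyq⟩ := SetLike.exists_of_lt h2
  set J := q ⊔ Ideal.span {y} with hJ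
  have hJp : J ≤ p := sup_le h2.le (by
    rw [Ideal.span_le, Set.singleton_subset_iff]; exact hyp)
  have hyJ : y ∈ J := Ideal.mem_sup_right (Ideal.subset_span rfl)
  have hrq : r ≤ q := h1.le
  -- every element of J outside r has span ≥ 1
  have hspan1 : ∀ w : A, w ∈ J → w ∉ r → 1 ≤ spanN 𝒜 r w := by
    intro w hwJ hwr
    by_contra hs
    push_neg at hs
    have h0 : spanN 𝒜 r w = 0 := by omega
    set d := topD 𝒜 r w with hd
    have hdb : botD 𝒜 r w = d := by
      have h1' := botD_le_topD 𝒜 r hwr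
      have hq1 : spanN 𝒜 r w = (topD 𝒜 r w - botD 𝒜 r w).toNat := rfl
      omega
    -- w - w_d has all components in r
    have hwd : w - (decompose 𝒜 w d : A) ∈ r := by
      apply mem_r_of_forall 𝒜 r
      intro i
      have hsub : (decompose 𝒜 (w - (decompose 𝒜 w d : A)) i : A) =
          (decompose 𝒜 w i : A) - (decompose 𝒜 (decompose 𝒜 w d : A) i : A) := by
        rw [DirectSum.decompose_sub]; simp
      rw [hsub]
      by_cases hid : i = d
      · subst hid
        rw [DirectSum.decompose_coe, DirectSum.of_eq_same]
        simp
      · rw [DirectSum.decompose_coe, DirectSum.of_eq_of_ne _ _ _ hid]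
        have : (decompose 𝒜 w i : A) ∈ r := by
          by_contra hc
          have m1 := le_topD 𝒜 r hwr ((mem_rS 𝒜 r).mpr hc)
          have m2 := botD_le 𝒜 r hwr ((mem_rS 𝒜 r).mpr hc)
          rw [hdb] at m2
          rw [← hd] at m1
          exact hid (by omega)
        simpa using this
    have hwdJ : (decompose 𝒜 w d : A) ∈ J := by
      have : (decompose 𝒜 w d : A) = w - (w - (decompose 𝒜 w d : A)) := by ring
      rw [this]
      exact Ideal.sub_mem _ hwJ (Ideal.mem_sup_left (hrq hwd))
    have : (decompose 𝒜 w d : A) ∈ r :=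
      homP _ (hJp hwdJ) ⟨d, SetLike.coe_mem _⟩
    exact ((mem_rS 𝒜 r).mp (topD_mem 𝒜 r hwr)) this
  -- pick u ∈ J \ r of minimal span
  obtain ⟨z0, hz0q, hz0r⟩ := SetLike.exists_of_lt h1
  have hex : ∃ n : ℕ, ∃ w : A, w ∈ J ∧ w ∉ r ∧ spanN 𝒜 r w = n :=
    ⟨spanN 𝒜 r z0, z0, Ideal.mem_sup_left hz0q, hz0r, rfl⟩
  obtain ⟨u, huJ, hur, huspan⟩ := Nat.find_spec hex
  have humin : ∀ w : A, w ∈ J → w ∉ r → spanN 𝒜 r u ≤ spanN 𝒜 r w := by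
    intro w hwJ hwr
    rw [huspan]
    exact Nat.find_min' hex ⟨w, hwJ, hwr, rfl⟩
  -- pick x ∈ q \ r of minimal span
  have hexq : ∃ n : ℕ, ∃ w : A, w ∈ q ∧ w ∉ r ∧ spanN 𝒜 r w = n :=
    ⟨spanN 𝒜 r z0, z0, hz0q, hz0r, rfl⟩
  obtain ⟨x, hxq, hxr, hxspan⟩ := Nat.find_spec hexq
  have hxmin : ∀ w : A, w ∈ q → w ∉ r → spanN 𝒜 r x ≤ spanN 𝒜 r w := by
    intro w hwq hwr
    rw [hxspan]
    exact Nat.find_min' hexq ⟨w, hwq, hwr, rfl⟩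
  set utop := (decompose 𝒜 u (topD 𝒜 r u) : A) with hutop
  have hutopr : utop ∉ r := (mem_rS 𝒜 r).mp (topD_mem 𝒜 r hur)
  have hutopq : utop ∉ q := by
    intro hc
    exact hutopr (homP _ (h2.le hc) ⟨_, SetLike.coe_mem _⟩)
  by_cases huq : u ∈ q
  · -- divide y by u
    obtain ⟨N, v, ρ, heq, hdisj⟩ := division 𝒜 r hr hh hur y
    rw [← hutop] at heq
    have hρr : ρ ∈ r := by
      rcases hdisj with h | ⟨hρr, hρs⟩
      · exact h
      · exfalso
        have hρJ : ρ ∈ J := by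
          have : ρ = utop ^ N * y - v * u := by rw [heq]; ring
          rw [this]
          exact Ideal.sub_mem _ (Ideal.mul_mem_left _ _ hyJ) (Ideal.mul_mem_left _ _ huJ)
        exact absurd (humin ρ hρJ hρr) (by omega)
    have : utop ^ N * y ∈ q := by
      rw [heq]
      exact Ideal.add_mem _ (Ideal.mul_mem_left _ _ huq) (hrq hρr)
    rcases hq.mem_or_mem this with h | h
    · exact hutopq (hq.mem_of_pow_mem N h)
    · exact hyq h
  · -- divide x by u
    obtain ⟨N, v, ρ, heq, hdisj⟩ := division 𝒜 r hr hh hur x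
    rw [← hutop] at heq
    have hρr : ρ ∈ r := by
      rcases hdisj with h | ⟨hρr, hρs⟩
      · exact h
      · exfalso
        have hρJ : ρ ∈ J := by
          have : ρ = utop ^ N * x - v * u := by rw [heq]; ring
          rw [this]
          exact Ideal.sub_mem _ (Ideal.mul_mem_left _ _ (Ideal.mem_sup_left hxq))
            (Ideal.mul_mem_left _ _ huJ)
        exact absurd (humin ρ hρJ hρr) (by omega)
    have hvu : v * u ∈ q := by
      have : v * u = utop ^ N * x - ρ := by rw [heq]; ring
      rw [this]
      exact Ideal.sub_mem _ (Ideal.mul_mem_left _ _ hxq) (hrq hρr)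
    have hvq : v ∈ q := (hq.mem_or_mem hvu).resolve_right huq
    have hpow : utop ^ N ∉ r := fun hc => hutopr (hr.mem_of_pow_mem N hc)
    have hux : utop ^ N * x ∉ r := by
      intro hc
      rcases hr.mem_or_mem hc with h | h
      exacts [hpow h, hxr h]
    have hvur : v * u ∉ r := by
      intro hc
      apply hux
      have : utop ^ N * x = v * u + ρ := heq
      rw [this]
      exact Ideal.add_mem _ hc hρr
    have hvr : v ∉ r := fun hc => hvur (Ideal.mul_mem_right _ _ hc)
    -- span bookkeeping
    obtain ⟨-, htvu, hbvu⟩ := mul_topD_botD 𝒜 r hr hh hvr hur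
    -- rS (v*u) = rS (utop^N * x) since they differ by ρ ∈ r
    have hcompsum : ∀ i : ℤ, (decompose 𝒜 (utop ^ N * x) i : A) =
        (decompose 𝒜 (v * u) i : A) + (decompose 𝒜 ρ i : A) := by
      intro i
      rw [heq, DirectSum.decompose_add]
      simp
    have hsame : rS 𝒜 r (v * u) = rS 𝒜 r (utop ^ N * x) := by
      ext i
      rw [mem_rS, mem_rS]
      have hρi : (decompose 𝒜 ρ i : A) ∈ r := hh i hρr
      constructor
      · intro hvi hci
        apply hvi
        have h5 : (decompose 𝒜 (v * u) i : A) =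
            (decompose 𝒜 (utop ^ N * x) i : A) - (decompose 𝒜 ρ i : A) := by
          rw [hcompsum i]; ring
        rw [h5]
        exact Ideal.sub_mem _ hci hρi
      · intro hvi hci
        apply hvi
        rw [hcompsum i]
        exact Ideal.add_mem _ hci hρi
    -- compute spans
    obtain ⟨-, htux, hbux⟩ := mul_topD_botD 𝒜 r hr hh hpow hxr
    have hNe : utop ^ N ∈ 𝒜 (N • (topD 𝒜 r u)) := SetLike.pow_mem_graded N (SetLike.coe_mem _)
    obtain ⟨htN, hbN⟩ := topD_homog 𝒜 r hNe hpow
    have htopeq : topD 𝒜 r (v * u) = topD 𝒜 r (utop ^ N * x) := by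
      unfold topD
      rw [hsame]
    have hboteq : botD 𝒜 r (v * u) = botD 𝒜 r (utop ^ N * x) := by
      unfold botD
      rw [hsame]
    have hu1 : 1 ≤ spanN 𝒜 r u := hspan1 u huJ hur
    have hxv : spanN 𝒜 r v < spanN 𝒜 r x := by
      have q1 : spanN 𝒜 r v = (topD 𝒜 r v - botD 𝒜 r v).toNat := rfl
      have q2 : spanN 𝒜 r u = (topD 𝒜 r u - botD 𝒜 r u).toNat := rfl
      have q3 : spanN 𝒜 r x = (topD 𝒜 r x - botD 𝒜 r x).toNat := rfl
      have w1 := botD_le_topD 𝒜 r hvr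
      have w2 := botD_le_topD 𝒜 r hur
      have w3 := botD_le_topD 𝒜 r hxr
      rw [htopeq, htux, htN] at htvu
      rw [hboteq, hbux, hbN] at hbvu
      omega
    exact absurd (hxmin v hvq hvr) (by omega)

end Between
section Insertion

open DirectSum

variable {A : Type*} [CommRing A] (𝒜 : ℤ → AddSubgroup A) [GradedRing 𝒜]

/-- Insertion: between two strictly nested homogeneous primes with a prime strictly
in between, there is a homogeneous prime strictly in between. -/
private theorem insertion [IsNoetherianRing A] {c t p : Ideal A}
    (hc : c.IsPrime) (ht : t.IsPrime) (hp : p.IsPrime)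
    (hch : c.IsHomogeneous 𝒜) (hph : p.IsHomogeneous 𝒜) (h1 : c < t) (h2 : t < p) :
    ∃ s : Ideal A, s.IsPrime ∧ s.IsHomogeneous 𝒜 ∧ c < s ∧ s < p := by
  classical
  obtain ⟨z, hzp, hzc⟩ := SetLike.exists_of_lt (h1.trans h2)
  -- a homogeneous element of p not in c
  obtain ⟨i, hic⟩ : ∃ i, (decompose 𝒜 z i : A) ∉ c := by
    by_contra hall
    push_neg at hall
    exact hzc (mem_r_of_forall 𝒜 c hall)
  set a := (decompose 𝒜 z i : A) with ha
  have hap : a ∈ p := hph i hzp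
  have haA : a ∈ 𝒜 i := SetLike.coe_mem _
  set I := c ⊔ Ideal.span {a} with hI
  have hIp : I ≤ p := sup_le ((h1.trans h2).le) (by
    rw [Ideal.span_le, Set.singleton_subset_iff]; exact hap)
  haveI := hp
  obtain ⟨s, hsmin, hsp⟩ := Ideal.exists_minimalPrimes_le hIp
  have hs_prime : s.IsPrime := hsmin.1.1
  have hIs : I ≤ s := hsmin.1.2
  -- s is homogeneous
  have hsh : s.IsHomogeneous 𝒜 := by
    have hcore_prime : (s.homogeneousCore 𝒜).toIdeal.IsPrime := hs_prime.homogeneousCore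
    have hIcore : I ≤ (s.homogeneousCore 𝒜).toIdeal := by
      apply sup_le
      · calc c = (c.homogeneousCore 𝒜).toIdeal := (hch.toIdeal_homogeneousCore_eq_self).symm
          _ ≤ (s.homogeneousCore 𝒜).toIdeal := Ideal.homogeneousCore_mono 𝒜 (le_trans le_sup_left hIs)
      · rw [Ideal.span_le, Set.singleton_subset_iff]
        exact Ideal.mem_homogeneousCore_of_homogeneous_of_mem ⟨i, haA⟩
          (hIs (Ideal.mem_sup_right (Ideal.subset_span rfl)))
    have hle : s ≤ (s.homogeneousCore 𝒜).toIdeal :=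
      hsmin.2 ⟨hcore_prime, hIcore⟩ (Ideal.toIdeal_homogeneousCore_le 𝒜 s)
    have : (s.homogeneousCore 𝒜).toIdeal = s :=
      le_antisymm (Ideal.toIdeal_homogeneousCore_le 𝒜 s) hle
    rw [← this]
    exact (s.homogeneousCore 𝒜).isHomogeneous
  have hcs : c < s := lt_of_le_of_ne (le_trans le_sup_left hIs)
    (fun h => hic (h ▸ hIs (Ideal.mem_sup_right (Ideal.subset_span rfl))))
  refine ⟨s, hs_prime, hsh, hcs, lt_of_le_of_ne hsp ?_⟩
  -- if s = p, then p is minimal over c + (a); contradiction with PIT in A/c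
  intro hsep
  subst hsep
  -- pass to the quotient by c
  haveI := hc
  haveI : IsDomain (A ⧸ c) := Ideal.Quotient.isDomain c
  let mk : A →+* A ⧸ c := Ideal.Quotient.mk c
  have hmk : Function.Surjective mk := Ideal.Quotient.mk_surjective
  have hker : RingHom.ker mk = c := Ideal.mk_ker
  have hkt : RingHom.ker mk ≤ t := by rw [hker]; exact h1.le
  have hkp : RingHom.ker mk ≤ s := by rw [hker]; exact (h1.trans h2).le
  haveI hpbar : (s.map mk).IsPrime := Ideal.map_isPrime_of_surjective hmk hkp
  haveI htbar : (t.map mk).IsPrime := Ideal.map_isPrime_of_surjective hmk hkt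
  have hcomap : ∀ {J : Ideal A}, RingHom.ker mk ≤ J → Ideal.comap mk (J.map mk) = J := by
    intro J hJ
    rw [Ideal.comap_map_of_surjective mk hmk]
    exact sup_eq_left.mpr (le_trans (le_of_eq rfl) hJ)
  have htlt : t.map mk < s.map mk := by
    constructor
    · exact Ideal.map_mono h2.le
    · intro hle
      have := Ideal.comap_mono (f := mk) hle
      rw [hcomap hkt, hcomap hkp] at this
      exact h2.ne (le_antisymm h2.le this)
  have hbotne : t.map mk ≠ ⊥ := by
    obtain ⟨w, hwt, hwc⟩ := SetLike.exists_of_lt h1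
    intro hbot
    have : mk w ∈ t.map mk := Ideal.mem_map_of_mem _ hwt
    rw [hbot, Ideal.mem_bot, Ideal.Quotient.eq_zero_iff_mem] at this
    exact hwc this
  -- p(=s) image is minimal over the principal ideal (mk a)
  have hminbar : s.map mk ∈ (Ideal.span {mk a}).minimalPrimes := by
    constructor
    · refine ⟨hpbar, ?_⟩
      rw [Ideal.span_le, Set.singleton_subset_iff]
      exact Ideal.mem_map_of_mem _ (hIs (Ideal.mem_sup_right (Ideal.subset_span rfl)))
    · rintro Q ⟨hQp, hQa⟩ hQle
      have hQc : Ideal.comap mk Q ≤ s := by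
        have := Ideal.comap_mono (f := mk) hQle
        rwa [hcomap hkp] at this
      haveI := hQp
      have hQprime : (Ideal.comap mk Q).IsPrime := Ideal.IsPrime.comap mk
      have hIQ : I ≤ Ideal.comap mk Q := by
        apply sup_le
        · intro w hw
          show mk w ∈ Q
          have : mk w = 0 := Ideal.Quotient.eq_zero_iff_mem.mpr hw
          rw [this]
          exact Q.zero_mem
        · rw [Ideal.span_le, Set.singleton_subset_iff]
          exact hQa (Ideal.subset_span rfl)
      have := hsmin.2 ⟨hQprime, hIQ⟩ hQc
      calc s.map mk = (Ideal.comap mk Q).map mk := by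
            rw [le_antisymm hQc this]
        _ = Q := Ideal.map_comap_of_surjective mk hmk Q
        _ ≤ Q := le_rfl
  -- PIT gives a contradiction
  have := pit hpbar htbar hminbar htlt (t := ⊥) Ideal.bot_prime bot_le
  exact hbotne (le_antisymm this bot_le)

end Insertion
section MainInduction

open DirectSum

variable {A : Type*} [CommRing A] [IsNoetherianRing A]
variable (𝒜 : ℤ → AddSubgroup A) [GradedRing 𝒜]


private lemma ps_lt_iff {x y : PrimeSpectrum A} : x < y ↔ x.asIdeal < y.asIdeal := Iff.rfl

private lemma gs_lt_iff {x y : {q : PrimeSpectrum A // Ideal.IsHomogeneous 𝒜 q.asIdeal}} : x < y ↔ x.1.asIdeal < y.1.asIdeal := Iff.rfl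

private theorem chain_ind : ∀ n : ℕ,
    (∀ s : LTSeries (PrimeSpectrum A), s.length = n →
      Ideal.IsHomogeneous 𝒜 s.last.asIdeal →
      ∃ t : LTSeries {q : PrimeSpectrum A // Ideal.IsHomogeneous 𝒜 q.asIdeal}, n ≤ t.length ∧ t.last.1 = s.last) ∧
    (∀ s : LTSeries (PrimeSpectrum A), s.length = n →
      ∃ t : LTSeries {q : PrimeSpectrum A // Ideal.IsHomogeneous 𝒜 q.asIdeal}, n ≤ t.length + 1 ∧
        t.last.1.asIdeal = (s.last.asIdeal.homogeneousCore 𝒜).toIdeal) := by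
  intro n
  induction n with
  | zero =>
      constructor
      · intro s _ hg
        exact ⟨RelSeries.singleton _ ⟨s.last, hg⟩, by simp,
          by rw [RelSeries.last_singleton]⟩
      · intro s _
        refine ⟨RelSeries.singleton _ ⟨⟨(s.last.asIdeal.homogeneousCore 𝒜).toIdeal,
          s.last.isPrime.homogeneousCore⟩, (s.last.asIdeal.homogeneousCore 𝒜).isHomogeneous⟩,
          by simp, ?_⟩
        rw [RelSeries.last_singleton]
  | succ m ih =>
      obtain ⟨ih1, ih2⟩ := ih
      have hlen' : ∀ s : LTSeries (PrimeSpectrum A), s.length = m + 1 →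
          s.eraseLast.length = m := by
        intro s hs
        show s.length - 1 = m
        omega
      have H1 : ∀ s : LTSeries (PrimeSpectrum A), s.length = m + 1 →
          Ideal.IsHomogeneous 𝒜 s.last.asIdeal →
          ∃ t : LTSeries {q : PrimeSpectrum A // Ideal.IsHomogeneous 𝒜 q.asIdeal}, m + 1 ≤ t.length ∧ t.last.1 = s.last := by
        intro s hlen hg
        have hne : s.length ≠ 0 := by omega
        have hrel : s.eraseLast.last < s.last := RelSeries.eraseLast_last_rel_last s hne
        by_cases hg' : Ideal.IsHomogeneous 𝒜 s.eraseLast.last.asIdeal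
        · obtain ⟨t, htl, htlast⟩ := ih1 s.eraseLast (hlen' s hlen) hg'
          have hsr : t.last < (⟨s.last, hg⟩ : {q : PrimeSpectrum A // Ideal.IsHomogeneous 𝒜 q.asIdeal}) := by
            rw [gs_lt_iff]
            show t.last.1.asIdeal < s.last.asIdeal
            rw [htlast]
            exact hrel
          refine ⟨t.snoc ⟨s.last, hg⟩ hsr, ?_, ?_⟩
          · have : (t.snoc ⟨s.last, hg⟩ hsr).length = t.length + 1 := rfl
            omega
          · rw [RelSeries.last_snoc]
        · -- insert a graded prime between the core of p' and p
          have hcprime : ((s.eraseLast.last.asIdeal.homogeneousCore 𝒜).toIdeal).IsPrime :=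
            s.eraseLast.last.isPrime.homogeneousCore
          have hclt : (s.eraseLast.last.asIdeal.homogeneousCore 𝒜).toIdeal <
              s.eraseLast.last.asIdeal :=
            lt_of_le_of_ne (Ideal.toIdeal_homogeneousCore_le _ _)
              (fun h => hg' (h ▸ (s.eraseLast.last.asIdeal.homogeneousCore 𝒜).isHomogeneous))
          obtain ⟨t, htl, htlast⟩ := ih2 s.eraseLast (hlen' s hlen)
          obtain ⟨s0, hs0p, hs0h, hcs0, hs0lt⟩ := insertion 𝒜 hcprime
            s.eraseLast.last.isPrime s.last.isPrime
            (s.eraseLast.last.asIdeal.homogeneousCore 𝒜).isHomogeneous hg hclt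
            (ps_lt_iff.mp hrel)
          have hr1 : t.last < (⟨⟨s0, hs0p⟩, hs0h⟩ : {q : PrimeSpectrum A // Ideal.IsHomogeneous 𝒜 q.asIdeal}) := by
            rw [gs_lt_iff]
            show t.last.1.asIdeal < s0
            rw [htlast]
            exact hcs0
          have hr2 : ((⟨⟨s0, hs0p⟩, hs0h⟩ : {q : PrimeSpectrum A // Ideal.IsHomogeneous 𝒜 q.asIdeal})) < ⟨s.last, hg⟩ := by
            rw [gs_lt_iff]
            exact hs0lt
          let t1 := t.snoc ⟨⟨s0, hs0p⟩, hs0h⟩ hr1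
          have hr2' : t1.last < (⟨s.last, hg⟩ :
              {q : PrimeSpectrum A // Ideal.IsHomogeneous 𝒜 q.asIdeal}) := by
            show (t.snoc ⟨⟨s0, hs0p⟩, hs0h⟩ hr1).last < _
            rw [RelSeries.last_snoc]
            exact hr2
          refine ⟨t1.snoc ⟨s.last, hg⟩ hr2', ?_, ?_⟩
          · have e1 : (t1.snoc ⟨s.last, hg⟩ hr2').length = t.length + 2 := rfl
            omega
          · rw [RelSeries.last_snoc]
      refine ⟨H1, ?_⟩
      intro s hlen
      by_cases hg : Ideal.IsHomogeneous 𝒜 s.last.asIdeal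
      · obtain ⟨t, htl, htlast⟩ := H1 s hlen hg
        refine ⟨t, by omega, ?_⟩
        rw [hg.toIdeal_homogeneousCore_eq_self, htlast]
      · have hne : s.length ≠ 0 := by omega
        have hrel : s.eraseLast.last < s.last := RelSeries.eraseLast_last_rel_last s hne
        have hc'prime : ((s.last.asIdeal.homogeneousCore 𝒜).toIdeal).IsPrime :=
          s.last.isPrime.homogeneousCore
        by_cases hle : (s.last.asIdeal.homogeneousCore 𝒜).toIdeal ≤ s.eraseLast.last.asIdeal
        · have hpc : s.eraseLast.last.asIdeal = (s.last.asIdeal.homogeneousCore 𝒜).toIdeal := by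
            by_contra hne'
            exact no_strict_between 𝒜 s.last.isPrime s.eraseLast.last.isPrime
              (lt_of_le_of_ne hle (Ne.symm hne')) (ps_lt_iff.mp hrel)
          have hg' : Ideal.IsHomogeneous 𝒜 s.eraseLast.last.asIdeal := by
            rw [hpc]
            exact (s.last.asIdeal.homogeneousCore 𝒜).isHomogeneous
          obtain ⟨t, htl, htlast⟩ := ih1 s.eraseLast (hlen' s hlen) hg'
          refine ⟨t, by omega, ?_⟩
          rw [htlast, hpc]
        · have hdlt : (s.eraseLast.last.asIdeal.homogeneousCore 𝒜).toIdeal <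
              (s.last.asIdeal.homogeneousCore 𝒜).toIdeal := by
            refine lt_of_le_of_ne ?_ ?_
            · exact Ideal.homogeneousCore_mono 𝒜 (ps_lt_iff.mp hrel).le
            · intro h
              exact hle (h ▸ Ideal.toIdeal_homogeneousCore_le 𝒜 _)
          obtain ⟨t, htl, htlast⟩ := ih2 s.eraseLast (hlen' s hlen)
          have hr : t.last < (⟨⟨(s.last.asIdeal.homogeneousCore 𝒜).toIdeal, hc'prime⟩,
              (s.last.asIdeal.homogeneousCore 𝒜).isHomogeneous⟩ : {q : PrimeSpectrum A // Ideal.IsHomogeneous 𝒜 q.asIdeal}) := by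
            rw [gs_lt_iff]
            show t.last.1.asIdeal < _
            rw [htlast]
            exact hdlt
          refine ⟨t.snoc _ hr, ?_, ?_⟩
          · have : (t.snoc _ hr).length = t.length + 1 := rfl
            omega
          · rw [RelSeries.last_snoc]

end MainInduction
/-- For a Noetherian ℤ-graded commutative ring `A`,
`*dim(A) ≤ dim(A) ≤ *dim(A) + 1`, where `dim` is the Krull dimension and `*dim` is the
supremum of lengths of chains of graded primes. -/
theorem stmt_14 {A : Type*} [CommRing A] [IsNoetherianRing A]
    (𝒜 : ℤ → AddSubgroup A) [GradedRing 𝒜] :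
    Order.krullDim {q : PrimeSpectrum A // Ideal.IsHomogeneous 𝒜 q.asIdeal} ≤ ringKrullDim A ∧
      ringKrullDim A ≤
        Order.krullDim {q : PrimeSpectrum A // Ideal.IsHomogeneous 𝒜 q.asIdeal} + (1 : WithBot ℕ∞) := by
  constructor
  · show Order.krullDim _ ≤ Order.krullDim (PrimeSpectrum A)
    exact Order.krullDim_le_of_strictMono Subtype.val (fun a b h => h)
  · by_cases hE : IsEmpty (PrimeSpectrum A)
    · show Order.krullDim (PrimeSpectrum A) ≤ _
      rw [Order.krullDim_eq_bot_iff.mpr hE]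
      exact bot_le
    · rw [not_isEmpty_iff] at hE
      have key : ∀ sN : LTSeries (PrimeSpectrum A), (sN.length : WithBot ℕ∞) ≤
          Order.krullDim {q : PrimeSpectrum A // Ideal.IsHomogeneous 𝒜 q.asIdeal} + 1 := by
        intro sN
        obtain ⟨t, htl, -⟩ := (chain_ind 𝒜 sN.length).2 sN rfl
        have h1 : (t.length : WithBot ℕ∞) ≤
            Order.krullDim {q : PrimeSpectrum A // Ideal.IsHomogeneous 𝒜 q.asIdeal} :=
          Order.LTSeries.length_le_krullDim t
        calc (sN.length : WithBot ℕ∞) ≤ ((t.length + 1 : ℕ) : WithBot ℕ∞) := by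
              exact_mod_cast htl
          _ = (t.length : WithBot ℕ∞) + 1 := by push_cast; ring
          _ ≤ _ := add_le_add_left h1 1
      show Order.krullDim (PrimeSpectrum A) ≤ _
      rw [Order.krullDim_eq_iSup_length]
      rw [show ((↑(⨆ (p : LTSeries (PrimeSpectrum A)), (p.length : ℕ∞)) : WithBot ℕ∞)) =
        ⨆ (p : LTSeries (PrimeSpectrum A)), ((p.length : ℕ∞) : WithBot ℕ∞) from ?_]
      · exact iSup_le key
      · rw [WithBot.coe_iSup]
        exact OrderTop.bddAbove _
end

section
/- Let S be a positively graded commutative ring and T a multiplicatively closed set of homogeneous elements of S containing at least one element of positive degree (and not containing 0). Then the map 𝔭 ↦ (T⁻¹𝔭)₀ gives a one-to-one inclusion-preserving correspondence between the graded primes 𝔭 of S with 𝔭 ∩ T = ∅ and S₊ ⊄ 𝔭, and the prime ideals of the degree-zero ring (T⁻¹S)₀. -/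
open DirectSum

section aux
variable {R : Type*} [CommRing R] (𝒜' : ℤ → AddSubgroup R) [GradedRing 𝒜']

theorem aux_proj_mul {i : ℤ} {a : R} (ha : a ∈ 𝒜' i) (x : R) (n : ℤ) :
    (DirectSum.decompose 𝒜' (a * x) n : R) = a * (DirectSum.decompose 𝒜' x (n - i) : R) := by
  classical
  conv_lhs => rw [← DirectSum.sum_support_decompose 𝒜' x, Finset.mul_sum]
  rw [DirectSum.decompose_sum, DFinsupp.finset_sum_apply, AddSubmonoidClass.coe_finset_sum]
  have h : ∀ j ∈ (DirectSum.decompose 𝒜' x).support,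
      (DirectSum.decompose 𝒜' (a * (DirectSum.decompose 𝒜' x j : R)) n : R)
        = if j = n - i then a * (DirectSum.decompose 𝒜' x j : R) else 0 := by
    intro j _
    have hm : a * (DirectSum.decompose 𝒜' x j : R) ∈ 𝒜' (i + j) :=
      SetLike.mul_mem_graded ha (SetLike.coe_mem _)
    by_cases hji : j = n - i
    · subst hji
      rw [if_pos rfl, DirectSum.decompose_of_mem_same 𝒜'
        (show a * (DirectSum.decompose 𝒜' x (n - i) : R) ∈ 𝒜' n by
          rwa [show i + (n - i) = n by ring] at hm)]
    · rw [if_neg hji, DirectSum.decompose_of_mem_ne 𝒜' hm (by omega : i + j ≠ n)]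
  rw [Finset.sum_congr rfl h, Finset.sum_ite_eq']
  split_ifs with hmem
  · rfl
  · rw [DFinsupp.notMem_support_iff.mp hmem]
    simp

theorem aux_proj_map {A : Type*} [CommRing A] (𝒜 : ℤ → AddSubgroup A) [GradedRing 𝒜]
    (f : A →+* R) (hf : ∀ {i : ℤ} {a : A}, a ∈ 𝒜 i → f a ∈ 𝒜' i) (a : A) (i : ℤ) :
    (DirectSum.decompose 𝒜' (f a) i : R) = f (DirectSum.decompose 𝒜 a i) := by
  classical
  conv_lhs => rw [← DirectSum.sum_support_decompose 𝒜 a]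
  rw [map_sum, DirectSum.decompose_sum, DFinsupp.finset_sum_apply,
    AddSubmonoidClass.coe_finset_sum]
  have h : ∀ j ∈ (DirectSum.decompose 𝒜 a).support,
      (DirectSum.decompose 𝒜' (f (DirectSum.decompose 𝒜 a j)) i : R)
        = if j = i then f (DirectSum.decompose 𝒜 a j) else 0 := by
    intro j _
    by_cases hji : j = i
    · subst hji
      rw [if_pos rfl, DirectSum.decompose_of_mem_same 𝒜' (hf (SetLike.coe_mem _))]
    · rw [if_neg hji, DirectSum.decompose_of_mem_ne 𝒜' (hf (SetLike.coe_mem _)) hji]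
  rw [Finset.sum_congr rfl h, Finset.sum_ite_eq']
  split_ifs with hmem
  · rfl
  · rw [DFinsupp.notMem_support_iff.mp hmem]
    simp

theorem aux_coe_pow (X : 𝒜' 0) (k : ℕ) : ((X ^ k : 𝒜' 0) : R) = (X : R) ^ k := by
  induction k with
  | zero => rfl
  | succ n ih => rw [pow_succ, pow_succ, ← ih]; rfl

theorem aux_coe_mul (X Y : 𝒜' 0) : ((X * Y : 𝒜' 0) : R) = (X : R) * Y := rfl

end aux

set_option maxHeartbeats 2000000 in
/-- Let `S` be a positively graded ring and `T` a multiplicative set of homogeneous elements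
containing an element of positive degree (and not `0`). The map `𝔭 ↦ (T⁻¹𝔭)₀` is a one-to-one,
inclusion-preserving correspondence between graded primes `𝔭` of `S` disjoint from `T` with
`S₊ ⊄ 𝔭`, and primes of the degree-zero part `(T⁻¹S)₀` of the graded localization. -/
theorem stmt_16 {A : Type*} [CommRing A]
    (𝒜 : ℤ → AddSubgroup A) [GradedRing 𝒜]
    (hpos : ∀ i : ℤ, i < 0 → ∀ a ∈ 𝒜 i, a = 0)
    (T : Submonoid A) (hThom : ∀ t ∈ T, SetLike.IsHomogeneousElem 𝒜 t)
    (hT0 : (0 : A) ∉ T) (hTpos : ∃ t ∈ T, ∃ i : ℤ, 0 < i ∧ t ∈ 𝒜 i)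
    (𝒜' : ℤ → AddSubgroup (Localization T)) [GradedRing 𝒜']
    (h𝒜' : ∀ (n : ℤ) (x : Localization T), x ∈ 𝒜' n ↔
      ∃ (i j : ℤ) (a t : A) (_ : t ∈ T), a ∈ 𝒜 i ∧ t ∈ 𝒜 j ∧ n = i - j ∧
        x * algebraMap A (Localization T) t = algebraMap A (Localization T) a)
    (ι : (𝒜' 0) →+* Localization T) (hι : ∀ x : 𝒜' 0, ι x = (x : Localization T)) :
    ∃ e : {𝔭 : Ideal A // 𝔭.IsPrime ∧ Ideal.IsHomogeneous 𝒜 𝔭 ∧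
          Disjoint (T : Set A) (𝔭 : Set A) ∧ ∃ i : ℤ, 0 < i ∧ ∃ a ∈ 𝒜 i, a ∉ 𝔭} ≃
        {q : Ideal (𝒜' 0) // q.IsPrime},
      (∀ p, (e p : Ideal (𝒜' 0)) =
          Ideal.comap ι (Ideal.map (algebraMap A (Localization T)) (p : Ideal A))) ∧
      ∀ p q : {𝔭 : Ideal A // 𝔭.IsPrime ∧ Ideal.IsHomogeneous 𝒜 𝔭 ∧
          Disjoint (T : Set A) (𝔭 : Set A) ∧ ∃ i : ℤ, 0 < i ∧ ∃ a ∈ 𝒜 i, a ∉ 𝔭},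
        (p : Ideal A) ≤ (q : Ideal A) ↔ (e p : Ideal (𝒜' 0)) ≤ (e q : Ideal (𝒜' 0)) := by
  classical
  obtain ⟨t0, ht0T, d, hd, ht0d⟩ := hTpos
  set R := Localization T with hR
  let f : A →+* R := algebraMap A R
  set e : ℕ := d.toNat with he_def
  have he : (e : ℤ) = d := Int.toNat_of_nonneg hd.le
  have he0 : e ≠ 0 := by omega
  -- `f` maps `𝒜 i` into `𝒜' i`
  have hfmem : ∀ {i : ℤ} {a : A}, a ∈ 𝒜 i → f a ∈ 𝒜' i := by
    intro i a ha
    rw [h𝒜']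
    exact ⟨i, 0, a, 1, T.one_mem, ha, SetLike.one_mem_graded 𝒜, by ring, by simp; rfl⟩
  -- the units coming from `t0`
  have hu : IsUnit (f t0) := IsLocalization.map_units R ⟨t0, ht0T⟩
  let U : Rˣ := hu.unit
  have hUval : (U : R) = f t0 := hu.unit_spec
  let w : ℤ → R := fun n => ((U ^ n : Rˣ) : R)
  have hwmul : ∀ m n : ℤ, w m * w n = w (m + n) := by
    intro m n
    show ((U ^ m : Rˣ) : R) * ((U ^ n : Rˣ) : R) = ((U ^ (m + n) : Rˣ) : R)
    rw [← Units.val_mul, ← zpow_add]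
  have hw0 : w 0 = 1 := by show ((U ^ (0:ℤ) : Rˣ) : R) = 1; simp
  have hUmem : (U : R) ∈ 𝒜' d := hUval ▸ hfmem ht0d
  have hUinvmem : ((U⁻¹ : Rˣ) : R) ∈ 𝒜' (-d) := by
    rw [h𝒜']
    refine ⟨0, d, 1, t0, ht0T, SetLike.one_mem_graded 𝒜, ht0d, by ring, ?_⟩
    rw [← hUval, map_one]
    exact U.inv_mul
  have hdeg : ∀ {i j : ℤ} {x : R}, x ∈ 𝒜' i → i = j → x ∈ 𝒜' j := by
    rintro i j x hx rfl; exact hx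
  have hwmem : ∀ n : ℤ, w n ∈ 𝒜' (n * d) := by
    intro n
    obtain ⟨k, rfl | rfl⟩ := Int.eq_nat_or_neg n
    · have : w (k : ℤ) = (U : R) ^ k := by
        show ((U ^ (k:ℤ) : Rˣ) : R) = (U : R) ^ k
        rw [zpow_natCast, Units.val_pow_eq_pow_val]
      rw [this]
      exact hdeg (SetLike.pow_mem_graded k hUmem) (by push_cast [nsmul_eq_mul]; ring)
    · have : w (-(k : ℤ)) = ((U⁻¹ : Rˣ) : R) ^ k := by
        show ((U ^ (-(k:ℤ)) : Rˣ) : R) = ((U⁻¹ : Rˣ) : R) ^ k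
        rw [zpow_neg, zpow_natCast, ← inv_pow, Units.val_pow_eq_pow_val]
      rw [this]
      exact hdeg (SetLike.pow_mem_graded k hUinvmem) (by push_cast [nsmul_eq_mul]; ring)
  -- degree-zero elements
  have hz0 : ∀ {i : ℤ} {x : R}, x ∈ 𝒜' i → x ^ e * w (-i) ∈ 𝒜' 0 := by
    intro i x hx
    exact hdeg (SetLike.mul_mem_graded (SetLike.pow_mem_graded e hx) (hwmem (-i)))
      (by rw [nsmul_eq_mul, he]; ring)
    -- the "degree zero part" of an ideal of the localization, as a set
  let Q0 : Ideal (𝒜' 0) → Set R := fun q => Subtype.val '' (q : Set (𝒜' 0))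
  have hQ0mem : ∀ (q : Ideal (𝒜' 0)) (x : R), x ∈ Q0 q ↔ ∃ hx : x ∈ 𝒜' 0, (⟨x, hx⟩ : 𝒜' 0) ∈ q := by
    intro q x
    constructor
    · rintro ⟨Y, hY, rfl⟩; exact ⟨Y.2, hY⟩
    · rintro ⟨hx, h⟩; exact ⟨⟨x, hx⟩, h, rfl⟩
  have hQ0zero : ∀ q, (0 : R) ∈ Q0 q := fun q => ⟨0, q.zero_mem, rfl⟩
  have hQ0add : ∀ q, ∀ {x y : R}, x ∈ Q0 q → y ∈ Q0 q → x + y ∈ Q0 q := by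
    rintro q x y ⟨X, hX, rfl⟩ ⟨Y, hY, rfl⟩
    exact ⟨X + Y, q.add_mem hX hY, rfl⟩
  have hQ0mul : ∀ q, ∀ {x y : R}, x ∈ 𝒜' 0 → y ∈ Q0 q → x * y ∈ Q0 q := by
    rintro q x y hx ⟨Y, hY, rfl⟩
    exact ⟨⟨x, hx⟩ * Y, q.mul_mem_left _ hY, rfl⟩
  have hQ0comap : ∀ (J : Ideal R) (x : R), x ∈ Q0 (Ideal.comap ι J) ↔ x ∈ 𝒜' 0 ∧ x ∈ J := by
    intro J x
    rw [hQ0mem]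
    constructor
    · rintro ⟨hx, h⟩
      refine ⟨hx, ?_⟩
      rw [Ideal.mem_comap, hι] at h
      exact h
    · rintro ⟨hx, h⟩
      exact ⟨hx, by rw [Ideal.mem_comap, hι]; exact h⟩
  -- recovery of homogeneous elements of a graded prime from its image
  have hrecov : ∀ (𝔭 : Ideal A), 𝔭.IsPrime → Disjoint (T : Set A) (𝔭 : Set A) →
      ∀ {i : ℤ} {a : A}, a ∈ 𝒜 i →
        (a ∈ 𝔭 ↔ f a ^ e * w (-i) ∈ Ideal.map f 𝔭) := by
    intro 𝔭 hp hdisj i a ha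
    constructor
    · intro hap
      rw [show e = 1 + (e - 1) by omega, pow_add, pow_one, mul_assoc]
      exact Ideal.mul_mem_right _ _ (Ideal.mem_map_of_mem f hap)
    · intro hz
      have h2 : f (a ^ e) ∈ Ideal.map f 𝔭 := by
        have h3 := Ideal.mul_mem_right (w i) _ hz
        rwa [mul_assoc, hwmul, show -i + i = 0 by ring, hw0, mul_one, ← map_pow] at h3
      have h4 : a ^ e ∈ 𝔭 := by
        have hc := IsLocalization.comap_map_of_isPrime_disjoint T R hp hdisj
        rw [← hc]
        exact h2
      exact hp.mem_of_pow_mem e h4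
  have hΦprime : ∀ (𝔭 : Ideal A), 𝔭.IsPrime → Disjoint (T : Set A) (𝔭 : Set A) →
      (Ideal.comap ι (Ideal.map f 𝔭)).IsPrime := fun 𝔭 hp hdisj =>
    letI := IsLocalization.isPrime_of_isPrime_disjoint T R 𝔭 hp hdisj
    Ideal.IsPrime.comap ι
  have hreflect : ∀ (𝔭 𝔮 : Ideal A), 𝔭.IsPrime → Ideal.IsHomogeneous 𝒜 𝔭 →
      Disjoint (T : Set A) (𝔭 : Set A) → 𝔮.IsPrime → Disjoint (T : Set A) (𝔮 : Set A) →
      Ideal.comap ι (Ideal.map f 𝔭) ≤ Ideal.comap ι (Ideal.map f 𝔮) → 𝔭 ≤ 𝔮 := by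
    intro 𝔭 𝔮 hp hphom hpd hq hqd hle a ha
    rw [← DirectSum.sum_support_decompose 𝒜 a]
    refine Ideal.sum_mem _ fun i _ => ?_
    have hai : (DirectSum.decompose 𝒜 a i : A) ∈ 𝔭 := hphom i ha
    have h1 := (hrecov 𝔭 hp hpd (SetLike.coe_mem (DirectSum.decompose 𝒜 a i))).1 hai
    have hz : f (DirectSum.decompose 𝒜 a i : A) ^ e * w (-i) ∈ 𝒜' 0 :=
      hz0 (hfmem (SetLike.coe_mem _))
    have h2 : (⟨_, hz⟩ : 𝒜' 0) ∈ Ideal.comap ι (Ideal.map f 𝔭) := by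
      rw [Ideal.mem_comap, hι]
      exact h1
    have h3 := hle h2
    rw [Ideal.mem_comap, hι] at h3
    exact (hrecov 𝔮 hq hqd (SetLike.coe_mem _)).2 h3
  refine ⟨Equiv.ofBijective
    (fun p => ⟨Ideal.comap ι (Ideal.map f p.1), hΦprime p.1 p.2.1 p.2.2.2.1⟩) ⟨?_, ?_⟩,
    fun p => rfl, ?_⟩
  · -- injectivity
    rintro p q hpq
    have h := congrArg Subtype.val hpq
    simp only at h
    exact Subtype.ext (le_antisymm
      (hreflect _ _ p.2.1 p.2.2.1 p.2.2.2.1 q.2.1 q.2.2.2.1 (le_of_eq h))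
      (hreflect _ _ q.2.1 q.2.2.1 q.2.2.2.1 p.2.1 p.2.2.2.1 (le_of_eq h.symm)))
  · -- surjectivity
    rintro ⟨q, hq⟩
    -- key additivity fact for the homogeneous condition
    have haddkey : ∀ {n : ℤ} {a b : R}, a ∈ 𝒜' n → b ∈ 𝒜' n →
        a ^ e * w (-n) ∈ Q0 q → b ^ e * w (-n) ∈ Q0 q → (a + b) ^ e * w (-n) ∈ Q0 q := by
      intro n a b ha hb hqa hqb
      have hab : a + b ∈ 𝒜' n := add_mem ha hb
      have hsq : ((a + b) ^ e * w (-n)) * ((a + b) ^ e * w (-n)) ∈ Q0 q := by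
        have heq : ((a + b) ^ e * w (-n)) * ((a + b) ^ e * w (-n))
            = (a + b) ^ (e + e) * w (-n + -n) := by
          rw [← hwmul, pow_add]; ring
        rw [heq, add_pow, Finset.sum_mul]
        refine Finset.sum_induction _ (· ∈ Q0 q) (fun u v hu hv => hQ0add q hu hv)
          (hQ0zero q) ?_
        intro k hk
        rw [Finset.mem_range] at hk
        by_cases hke : e ≤ k
        · have hkle : k ≤ e + e := by omega
          have heq2 : a ^ k * b ^ (e + e - k) * ((e + e).choose k : R) * w (-n + -n)
              = (a ^ (k - e) * b ^ (e + e - k) * ((e + e).choose k : R) * w (-n))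
                * (a ^ e * w (-n)) := by
            rw [← hwmul, show a ^ k = a ^ e * a ^ (k - e) by rw [← pow_add]; congr 1; omega]
            ring
          rw [heq2]
          refine hQ0mul q ?_ hqa
          refine hdeg (SetLike.mul_mem_graded (SetLike.mul_mem_graded (SetLike.mul_mem_graded
            (SetLike.pow_mem_graded _ ha) (SetLike.pow_mem_graded _ hb))
            (SetLike.natCast_mem_graded _ _)) (hwmem (-n))) ?_
          rw [← he]
          push_cast [nsmul_eq_mul, Nat.cast_sub hke, Nat.cast_sub hkle]
          ring
        · have hke' : k ≤ e := by omega
          have heq2 : a ^ k * b ^ (e + e - k) * ((e + e).choose k : R) * w (-n + -n)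
              = (a ^ k * b ^ (e - k) * ((e + e).choose k : R) * w (-n))
                * (b ^ e * w (-n)) := by
            rw [← hwmul, show b ^ (e + e - k) = b ^ e * b ^ (e - k) by rw [← pow_add]; congr 1; omega]
            ring
          rw [heq2]
          refine hQ0mul q ?_ hqb
          refine hdeg (SetLike.mul_mem_graded (SetLike.mul_mem_graded (SetLike.mul_mem_graded
            (SetLike.pow_mem_graded _ ha) (SetLike.pow_mem_graded _ hb))
            (SetLike.natCast_mem_graded _ _)) (hwmem (-n))) ?_
          rw [← he]
          push_cast [nsmul_eq_mul, Nat.cast_sub hke']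
          ring
      obtain ⟨Y, hY, hYeq⟩ := hsq
      have hzmem : (a + b) ^ e * w (-n) ∈ 𝒜' 0 := hz0 hab
      have hYZ : (⟨(a + b) ^ e * w (-n), hzmem⟩ : 𝒜' 0) * ⟨(a + b) ^ e * w (-n), hzmem⟩ = Y :=
        Subtype.coe_injective hYeq.symm
      have h2 : (⟨(a + b) ^ e * w (-n), hzmem⟩ : 𝒜' 0) ∈ q := by
        rcases hq.mem_or_mem (show _ ∈ q from hYZ ▸ hY) with h | h <;> exact h
      exact ⟨_, h2, rfl⟩
    -- the ideal `P` of the localization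
    let Pc : Set R := {x | ∀ n : ℤ, (DirectSum.decompose 𝒜' x n : R) ^ e * w (-n) ∈ Q0 q}
    have hPc0 : (0 : R) ∈ Pc := by
      intro n
      rw [DirectSum.decompose_zero]
      simp only [DirectSum.zero_apply, ZeroMemClass.coe_zero]
      rw [zero_pow he0, zero_mul]
      exact hQ0zero q
    have hPcadd : ∀ {x y : R}, x ∈ Pc → y ∈ Pc → x + y ∈ Pc := by
      intro x y hx hy n
      rw [DirectSum.decompose_add, DirectSum.add_apply, AddSubgroup.coe_add]
      exact haddkey (SetLike.coe_mem _) (SetLike.coe_mem _) (hx n) (hy n)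
    have hPchom : ∀ {n : ℤ} {x : R}, x ∈ 𝒜' n → x ^ e * w (-n) ∈ Q0 q → x ∈ Pc := by
      intro n x hx hcond m
      by_cases hmn : m = n
      · subst hmn
        rw [DirectSum.decompose_of_mem_same 𝒜' hx]
        exact hcond
      · rw [DirectSum.decompose_of_mem_ne 𝒜' hx (Ne.symm hmn), zero_pow he0, zero_mul]
        exact hQ0zero q
    have hPcsmul : ∀ (c x : R), x ∈ Pc → c * x ∈ Pc := by
      intro c x hx
      have hc : c * x = ∑ i ∈ (DirectSum.decompose 𝒜' c).support,
          (DirectSum.decompose 𝒜' c i : R) * x := by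
        rw [← Finset.sum_mul, DirectSum.sum_support_decompose 𝒜' c]
      rw [hc]
      refine Finset.sum_induction _ (· ∈ Pc) (fun u v hu hv => hPcadd hu hv) hPc0 ?_
      intro i _
      intro n
      rw [aux_proj_mul 𝒜' (SetLike.coe_mem (DirectSum.decompose 𝒜' c i)) x n]
      have heq : ((DirectSum.decompose 𝒜' c i : R) * (DirectSum.decompose 𝒜' x (n - i) : R)) ^ e
            * w (-n)
          = ((DirectSum.decompose 𝒜' c i : R) ^ e * w (-i))
            * ((DirectSum.decompose 𝒜' x (n - i) : R) ^ e * w (-(n - i))) := by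
        rw [mul_pow, show (-n : ℤ) = -i + -(n - i) by ring, ← hwmul]
        ring
      rw [heq]
      exact hQ0mul q (hz0 (SetLike.coe_mem _)) (hx (n - i))
    let P : Ideal R :=
      { carrier := Pc
        add_mem' := fun hx hy => hPcadd hx hy
        zero_mem' := hPc0
        smul_mem' := fun c {x} hx => hPcsmul c x hx }
    have hPmem : ∀ {x : R}, x ∈ P ↔
        ∀ n : ℤ, (DirectSum.decompose 𝒜' x n : R) ^ e * w (-n) ∈ Q0 q := fun {x} => Iff.rfl
    have hPhom : Ideal.IsHomogeneous 𝒜' P := by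
      intro i r hr
      exact hPchom (SetLike.coe_mem _) (hPmem.mp hr i)
    have hPne : P ≠ ⊤ := by
      intro htop
      have h1 : (1 : R) ∈ P := htop ▸ Submodule.mem_top
      have h2 := hPmem.mp h1 0
      rw [DirectSum.decompose_of_mem_same 𝒜' (SetLike.one_mem_graded 𝒜'), one_pow, neg_zero,
        hw0, mul_one] at h2
      obtain ⟨Y, hY, hYeq⟩ := h2
      have hY1 : Y = 1 := Subtype.coe_injective hYeq
      exact hq.ne_top (q.eq_top_iff_one.mpr (hY1 ▸ hY))
    have hPprime : P.IsPrime := by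
      refine hPhom.isPrime_of_homogeneous_mem_or_mem hPne ?_
      rintro x y ⟨m, hx⟩ ⟨n, hy⟩ hxy
      have h1 := hPmem.mp hxy (m + n)
      rw [DirectSum.decompose_of_mem_same 𝒜' (SetLike.mul_mem_graded hx hy)] at h1
      have heq : (x * y) ^ e * w (-(m + n)) = (x ^ e * w (-m)) * (y ^ e * w (-n)) := by
        rw [mul_pow, show (-(m + n) : ℤ) = -m + -n by ring, ← hwmul]
        ring
      rw [heq] at h1
      obtain ⟨Y, hY, hYeq⟩ := h1
      have hxm : x ^ e * w (-m) ∈ 𝒜' 0 := hz0 hx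
      have hyn : y ^ e * w (-n) ∈ 𝒜' 0 := hz0 hy
      have hYZ : (⟨x ^ e * w (-m), hxm⟩ : 𝒜' 0) * ⟨y ^ e * w (-n), hyn⟩ = Y :=
        Subtype.coe_injective hYeq.symm
      rcases hq.mem_or_mem (show _ ∈ q from hYZ ▸ hY) with h | h
      · exact Or.inl (hPchom hx ⟨_, h, rfl⟩)
      · exact Or.inr (hPchom hy ⟨_, h, rfl⟩)
    have hpprime : (Ideal.comap f P).IsPrime := by
      letI := hPprime
      exact Ideal.IsPrime.comap f
    have hphom : Ideal.IsHomogeneous 𝒜 (Ideal.comap f P) := by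
      intro i r hr
      rw [Ideal.mem_comap] at hr ⊢
      have h1 := hPhom i hr
      rwa [aux_proj_map 𝒜' 𝒜 f (fun {i} {a} ha => hfmem ha) r i] at h1
    have hpdisj : Disjoint (T : Set A) ((Ideal.comap f P : Ideal A) : Set A) := by
      rw [Set.disjoint_left]
      rintro t' htT htP
      obtain ⟨j, htj⟩ := hThom t' htT
      have hcond := hPmem.mp (show f t' ∈ P from htP) j
      rw [DirectSum.decompose_of_mem_same 𝒜' (hfmem htj)] at hcond
      have hu' : IsUnit (f t') := IsLocalization.map_units R ⟨t', htT⟩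
      have hinv : ((hu'.unit⁻¹ : Rˣ) : R) ∈ 𝒜' (-j) := by
        rw [h𝒜']
        refine ⟨0, j, 1, t', htT, SetLike.one_mem_graded 𝒜, htj, by ring, ?_⟩
        rw [map_one]
        exact hu'.val_inv_mul
      have hz' : ((hu'.unit⁻¹ : Rˣ) : R) ^ e * w j ∈ 𝒜' 0 :=
        hdeg (SetLike.mul_mem_graded (SetLike.pow_mem_graded e hinv) (hwmem j))
          (by rw [nsmul_eq_mul, he]; ring)
      obtain ⟨Y, hY, hYeq⟩ := hcond
      have hone : (f t' ^ e * w (-j)) * (((hu'.unit⁻¹ : Rˣ) : R) ^ e * w j) = 1 := by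
        rw [show (f t' ^ e * w (-j)) * (((hu'.unit⁻¹ : Rˣ) : R) ^ e * w j)
            = (f t' * ((hu'.unit⁻¹ : Rˣ) : R)) ^ e * (w (-j) * w j) by rw [mul_pow]; ring,
          hwmul, show (-j + j : ℤ) = 0 by ring, hw0,
          show f t' * ((hu'.unit⁻¹ : Rˣ) : R) = 1 from hu'.mul_val_inv,
          one_pow, mul_one]
      have hYinv : Y * ⟨_, hz'⟩ = 1 := Subtype.coe_injective (by
        show (Y : R) * (((hu'.unit⁻¹ : Rˣ) : R) ^ e * w j) = ((1 : 𝒜' 0) : R)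
        rw [hYeq, hone]
        rfl)
      have h1q : (1 : 𝒜' 0) ∈ q := hYinv ▸ q.mul_mem_right _ hY
      exact hq.ne_top (q.eq_top_iff_one.mpr h1q)
    refine ⟨⟨Ideal.comap f P, hpprime, hphom, hpdisj, d, hd, t0, ht0d,
      Set.disjoint_left.mp hpdisj ht0T⟩, ?_⟩
    apply Subtype.ext
    show Ideal.comap ι (Ideal.map f (Ideal.comap f P)) = q
    rw [show Ideal.map f (Ideal.comap f P) = P from IsLocalization.map_comap T R P]
    ext X
    rw [Ideal.mem_comap, hι]
    constructor
    · intro hX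
      have h2 := hPmem.mp hX 0
      rw [DirectSum.decompose_of_mem_same 𝒜' X.2, neg_zero, hw0, mul_one] at h2
      obtain ⟨Y, hY, hYeq⟩ := h2
      have hYX : Y = X ^ e := Subtype.coe_injective (by
        show (Y : R) = ((X ^ e : 𝒜' 0) : R)
        rw [hYeq, aux_coe_pow])
      exact hq.mem_of_pow_mem e (hYX ▸ hY)
    · intro hX
      refine hPchom X.2 ?_
      rw [neg_zero, hw0, mul_one, ← aux_coe_pow]
      exact ⟨X ^ e, q.pow_mem_of_mem hX e (by omega), rfl⟩
  · -- order correspondence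
    intro p q
    constructor
    · intro h
      exact Ideal.comap_mono (Ideal.map_mono h)
    · intro h
      exact hreflect _ _ p.2.1 p.2.2.1 p.2.2.2.1 q.2.1 q.2.2.2.1 h
end
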